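/- arXiv:1405.3375 — 6 statements merged into one kernel-verified Lean document; each statement's English description precedes it below -/
import Mathlib

section
/- Every Gorenstein weak injective module M satisfies Ext^i_R(W, M) = 0 for every weak injective R-module W and every i ≥ 1. -/
open CategoryTheory

universe u

noncomputable section

variable (R : Type u) [Ring R]

/-- Vanishing of `Ext^n_R(N, M)` for left `R`-modules, expressed via the `Ext` bifunctor
on the `ℤ`-linear abelian category `ModuleCat R`. -/
def ExtVanish (n : ℕ) (N M : ModuleCat.{u} R) : Prop :=
  Subsingleton (((_root_.Ext ℤ (ModuleCat.{u} R) n).obj (Opposite.op N)).obj M)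

/-- An `R`-module is super finitely presented if it admits a resolution by
finitely generated projective modules. -/
def SuperFinitelyPresented (N : ModuleCat.{u} R) : Prop :=
  ∃ (F : ℕ → ModuleCat.{u} R) (d : ∀ n, F (n + 1) →ₗ[R] F n) (ε : F 0 →ₗ[R] N),
    (∀ n, Module.Finite R (F n)) ∧ (∀ n, Module.Projective R (F n)) ∧
    Function.Surjective ε ∧ Function.Exact (d 0) ε ∧
    (∀ n, Function.Exact (d (n + 1)) (d n))

/-- An `R`-module `W` is weak injective if `Ext^1_R(N, W) = 0` for every super finitely
presented module `N`. -/
def WeakInjective (W : ModuleCat.{u} R) : Prop :=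
  ∀ N : ModuleCat.{u} R, SuperFinitelyPresented R N → ExtVanish R 1 N W

/-- `wid_R M ≤ n` : `Ext^{n+1}_R(N, M) = 0` for every super finitely presented `N`. -/
def WidLE (M : ModuleCat.{u} R) (n : ℕ) : Prop :=
  ∀ N : ModuleCat.{u} R, SuperFinitelyPresented R N → ExtVanish R (n + 1) N M

/-- The weak injective dimension, as an element of `ℕ∞`. -/
def Wid (M : ModuleCat.{u} R) : ℕ∞ :=
  sInf {c : ℕ∞ | ∃ n : ℕ, c = n ∧ WidLE R M n}

/-- A doubly infinite exact complex of injective modules which stays exact after applying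
`Hom_R(W, -)` for every module `W` in the test class `𝒯`. -/
def IsTotallyAcyclicInjComplex (𝒯 : ModuleCat.{u} R → Prop)
    (I : ℤ → ModuleCat.{u} R) (d : ∀ n : ℤ, I n →ₗ[R] I (n + 1)) : Prop :=
  (∀ n, Module.Injective R (I n)) ∧
  (∀ n, Function.Exact (d n) (d (n + 1))) ∧
  (∀ W : ModuleCat.{u} R, 𝒯 W → ∀ n,
    Function.Exact (fun g : W →ₗ[R] I n => (d n).comp g)
      (fun g : W →ₗ[R] I (n + 1) => (d (n + 1)).comp g))

/-- `M` is Gorenstein injective relative to the test class `𝒯` : `M` is the cokernel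
`Coker (I_1 → I_0)` of a `Hom(𝒯, -)`-exact exact complex of injective modules. -/
def GorensteinRelInjective (𝒯 : ModuleCat.{u} R → Prop) (M : ModuleCat.{u} R) : Prop :=
  ∃ (I : ℤ → ModuleCat.{u} R) (d : ∀ n : ℤ, I n →ₗ[R] I (n + 1)) (π : I 0 →ₗ[R] M),
    IsTotallyAcyclicInjComplex R 𝒯 I d ∧
    Function.Surjective π ∧ Function.Exact (d (-1)) π

/-- Gorenstein weak injective modules: the test class is that of weak injective modules. -/
def GorensteinWeakInjective (M : ModuleCat.{u} R) : Prop :=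
  GorensteinRelInjective R (WeakInjective R) M

/-- Gorenstein injective modules: the test class is that of injective modules. -/
def GorensteinInjective (M : ModuleCat.{u} R) : Prop :=
  GorensteinRelInjective R (fun E => Module.Injective R E) M

/-- The data of an exact sequence `0 → M → G^0 → ⋯ → G^n → 0` (the modules `G^i` for
`i > n` being trivial). -/
def IsFiniteCoresolution (M : ModuleCat.{u} R) (n : ℕ) (G : ℕ → ModuleCat.{u} R)
    (d : ∀ i, G i →ₗ[R] G (i + 1)) (ε : M →ₗ[R] G 0) : Prop :=
  Function.Injective ε ∧ Function.Exact ε (d 0) ∧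
  (∀ i, Function.Exact (d i) (d (i + 1))) ∧
  (∀ i, n < i → ∀ x : G i, x = 0)

/-- `Gwid_R M ≤ n` : `M` has a coresolution of length `n` by Gorenstein weak injective
modules. -/
def GwidLE (M : ModuleCat.{u} R) (n : ℕ) : Prop :=
  ∃ (G : ℕ → ModuleCat.{u} R) (d : ∀ i, G i →ₗ[R] G (i + 1)) (ε : M →ₗ[R] G 0),
    IsFiniteCoresolution R M n G d ε ∧ ∀ i, GorensteinWeakInjective R (G i)

/-- The Gorenstein weak injective dimension, as an element of `ℕ∞`. -/
def Gwid (M : ModuleCat.{u} R) : ℕ∞ :=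
  sInf {c : ℕ∞ | ∃ n : ℕ, c = n ∧ GwidLE R M n}

/-- `Gid_R M ≤ n`, via coresolutions by Gorenstein injective modules. -/
def GidLE (M : ModuleCat.{u} R) (n : ℕ) : Prop :=
  ∃ (G : ℕ → ModuleCat.{u} R) (d : ∀ i, G i →ₗ[R] G (i + 1)) (ε : M →ₗ[R] G 0),
    IsFiniteCoresolution R M n G d ε ∧ ∀ i, GorensteinInjective R (G i)

/-- The Gorenstein injective dimension, as an element of `ℕ∞`. -/
def Gid (M : ModuleCat.{u} R) : ℕ∞ :=
  sInf {c : ℕ∞ | ∃ n : ℕ, c = n ∧ GidLE R M n}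

/-- `id_R M ≤ n`, via coresolutions by injective modules. -/
def IdLE (M : ModuleCat.{u} R) (n : ℕ) : Prop :=
  ∃ (G : ℕ → ModuleCat.{u} R) (d : ∀ i, G i →ₗ[R] G (i + 1)) (ε : M →ₗ[R] G 0),
    IsFiniteCoresolution R M n G d ε ∧ ∀ i, Module.Injective R (G i)

/-- The injective dimension, as an element of `ℕ∞`. -/
def Idim (M : ModuleCat.{u} R) : ℕ∞ :=
  sInf {c : ℕ∞ | ∃ n : ℕ, c = n ∧ IdLE R M n}

/-- The data of an exact sequence `0 → P_n → ⋯ → P_0 → M → 0`. -/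
def IsFiniteResolution (M : ModuleCat.{u} R) (n : ℕ) (P : ℕ → ModuleCat.{u} R)
    (d : ∀ i, P (i + 1) →ₗ[R] P i) (ε : P 0 →ₗ[R] M) : Prop :=
  Function.Surjective ε ∧ Function.Exact (d 0) ε ∧
  (∀ i, Function.Exact (d (i + 1)) (d i)) ∧
  (∀ i, n < i → ∀ x : P i, x = 0)

/-- `pd_R M ≤ n`, via resolutions by projective modules. -/
def PdLE (M : ModuleCat.{u} R) (n : ℕ) : Prop :=
  ∃ (P : ℕ → ModuleCat.{u} R) (d : ∀ i, P (i + 1) →ₗ[R] P i) (ε : P 0 →ₗ[R] M),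
    IsFiniteResolution R M n P d ε ∧ ∀ i, Module.Projective R (P i)

end

variable (R : Type u) [Ring R]

/-- A short exact sequence `0 → L → M → N → 0` of `R`-modules. -/
def ShortExactSeq (L M N : ModuleCat.{u} R) (f : L →ₗ[R] M) (g : M →ₗ[R] N) : Prop :=
  Function.Injective f ∧ Function.Surjective g ∧ Function.Exact f g

/-- Exactness of `0 → Hom(C, X) → Hom(B, X) → Hom(A, X) → 0` induced by
`0 → A → B → C → 0`. -/
def HomContraExact (X : ModuleCat.{u} R) {A B C : ModuleCat.{u} R}
    (f : A →ₗ[R] B) (g : B →ₗ[R] C) : Prop :=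
  Function.Injective (fun h : C →ₗ[R] X => h.comp g) ∧
  Function.Exact (fun h : C →ₗ[R] X => h.comp g) (fun h : B →ₗ[R] X => h.comp f) ∧
  Function.Surjective (fun h : B →ₗ[R] X => h.comp f)

/-- A short exact sequence is `GWI`-copure exact if `Hom_R(-, X)` leaves it exact for
every Gorenstein weak injective module `X`. -/
def GWICopureExact {A B C : ModuleCat.{u} R} (f : A →ₗ[R] B) (g : B →ₗ[R] C) : Prop :=
  ShortExactSeq R A B C f g ∧
  ∀ X : ModuleCat.{u} R, GorensteinWeakInjective R X → HomContraExact R X f g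

/-- `M` is `GWI`-copure injective if `Hom_R(-, M)` is exact on every `GWI`-copure exact
sequence. -/
def GWICopureInjectiveMod (M : ModuleCat.{u} R) : Prop :=
  ∀ (A B C : ModuleCat.{u} R) (f : A →ₗ[R] B) (g : B →ₗ[R] C),
    GWICopureExact R f g → HomContraExact R M f g

/-- `φ : M → G` is a Gorenstein weak injective preenvelope of `M`. -/
def GWIPreenvelope (M G : ModuleCat.{u} R) (φ : M →ₗ[R] G) : Prop :=
  GorensteinWeakInjective R G ∧
  ∀ G' : ModuleCat.{u} R, GorensteinWeakInjective R G' →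
    ∀ f : M →ₗ[R] G', ∃ g : G →ₗ[R] G', g.comp φ = f

/-- A `WI`-pure Tate injective resolution of `M` : an injective resolution
`0 → M → E^0 → E^1 → ⋯`, a `WI`-pure exact complex `T` of injectives, and a chain map
`u : E → T` which is an isomorphism in all sufficiently large degrees. -/
def WIPureTateInjectiveResolution (M : ModuleCat.{u} R)
    (E : ℕ → ModuleCat.{u} R) (dE : ∀ n, E n →ₗ[R] E (n + 1)) (ε : M →ₗ[R] E 0)
    (T : ℤ → ModuleCat.{u} R) (dT : ∀ n : ℤ, T n →ₗ[R] T (n + 1))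
    (u : ∀ n : ℕ, E n →ₗ[R] T n) : Prop :=
  (∀ n, Module.Injective R (E n)) ∧ Function.Injective ε ∧
  Function.Exact ε (dE 0) ∧ (∀ n, Function.Exact (dE n) (dE (n + 1))) ∧
  IsTotallyAcyclicInjComplex R (WeakInjective R) T dT ∧
  (∀ n : ℕ, (dT n).comp (u n) = (u (n + 1)).comp (dE n)) ∧
  ∃ N : ℕ, ∀ n, N ≤ n → Function.Bijective (u n)

/-- Vanishing of the relative Tate cohomology `Êxt^i_GWI(N, M)` for all `i ∈ ℤ`,
computed from the `WI`-pure exact complex `T` : the complex `Hom_R(N, T)` is exact. -/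
def ExtHatVanishesAll (N : ModuleCat.{u} R) (T : ℤ → ModuleCat.{u} R)
    (dT : ∀ n : ℤ, T n →ₗ[R] T (n + 1)) : Prop :=
  ∀ n : ℤ, Function.Exact (fun g : N →ₗ[R] T n => (dT n).comp g)
    (fun g : N →ₗ[R] T (n + 1) => (dT (n + 1)).comp g)

namespace GWIAux

variable {R : Type u} [Ring R]


variable {R : Type u} [Ring R]

lemma extend_aux {Q A B C : ModuleCat.{u} R} (hQ : Module.Injective R Q)
    (d1 : C →ₗ[R] B) (d0 : B →ₗ[R] A)
    (hex : Function.Exact d1 d0) (φ : B →ₗ[R] Q) (hφ : ∀ x, φ (d1 x) = 0) :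
    ∃ h : A →ₗ[R] Q, ∀ x, h (d0 x) = φ x := by
  have hker : LinearMap.ker d0 ≤ LinearMap.ker φ := by
    intro x hx
    obtain ⟨y, rfl⟩ := (hex x).mp hx
    exact hφ y
  set K := LinearMap.ker d0
  let φq : (B ⧸ K) →ₗ[R] Q := Submodule.liftQ K φ hker
  let e : (B ⧸ K) →ₗ[R] A := Submodule.liftQ K d0 le_rfl
  have he : Function.Injective e := by
    rw [← LinearMap.ker_eq_bot, Submodule.ker_liftQ_eq_bot]
    exact le_rfl
  obtain ⟨h, hh⟩ := hQ.out e he φq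
  exact ⟨h, fun b => hh (Submodule.Quotient.mk b)⟩

lemma pullback_aux {M A B : ModuleCat.{u} R} (ι : M →ₗ[R] A) (hι : Function.Injective ι)
    (u : B →ₗ[R] A) (hu : ∀ x, u x ∈ LinearMap.range ι) :
    ∃ g : B →ₗ[R] M, ∀ x, ι (g x) = u x := by
  let eM := LinearEquiv.ofInjective ι hι
  refine ⟨(eM.symm : LinearMap.range ι →ₗ[R] M).comp (u.codRestrict (LinearMap.range ι) hu),
    fun x => ?_⟩
  have key : ∀ y : LinearMap.range ι, ι (eM.symm y) = (y : A) := by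
    intro y
    conv_rhs => rw [← eM.apply_symm_apply y]
    exact (LinearEquiv.ofInjective_apply ι (eM.symm y)).symm
  exact key ⟨u x, hu x⟩

lemma key {W : ModuleCat.{u} R}
    (P : ℕ → ModuleCat.{u} R) (d : ∀ n, P (n + 1) →ₗ[R] P n) (ε : P 0 →ₗ[R] W)
    (hP : ∀ n, Module.Projective R (P n))
    (hε : Function.Surjective ε) (hex0 : Function.Exact (d 0) ε)
    (hex : ∀ n, Function.Exact (d (n + 1)) (d n)) :
    ∀ (j : ℕ) (M : ModuleCat.{u} R) (J : ℤ → ModuleCat.{u} R)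
      (dJ : ∀ n : ℤ, J n →ₗ[R] J (n + 1)) (ι : M →ₗ[R] J 0),
      (∀ n, Module.Injective R (J n)) → Function.Injective ι →
      Function.Exact ι (dJ 0) → (∀ n, Function.Exact (dJ n) (dJ (n + 1))) →
      (∀ (n : ℤ) (k : W →ₗ[R] J (n + 1)), (dJ (n + 1)).comp k = 0 →
        ∃ ℓ : W →ₗ[R] J n, (dJ n).comp ℓ = k) →
      ∀ f : P (j + 1) →ₗ[R] M, (∀ x, f (d (j + 1) x) = 0) →
        ∃ g : P j →ₗ[R] M, ∀ x, g (d j x) = f x := by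
  intro j
  induction j with
  | zero =>
    intro M J dJ ι hJinj hι hexι hexJ hHom f hf
    obtain ⟨h, hh⟩ := extend_aux (hJinj 0) (d 1) (d 0) (hex 0) (ι.comp f)
      (fun x => by simp [hf x])
    -- h : P 0 →ₗ J 0 with h (d 0 x) = ι (f x)
    have hk'd : ∀ x : P 1, dJ 0 (h (d 0 x)) = 0 := by
      intro x
      rw [hh x]
      exact hexι.apply_apply_eq_zero (f x)
    have hkerε : LinearMap.ker ε ≤ LinearMap.ker ((dJ 0).comp h) := by
      intro x hx
      obtain ⟨y, rfl⟩ := (hex0 x).mp hx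
      exact hk'd y
    let eW : (P 0 ⧸ LinearMap.ker ε) ≃ₗ[R] W := ε.quotKerEquivOfSurjective hε
    let kbar : W →ₗ[R] J 1 :=
      (Submodule.liftQ (LinearMap.ker ε) ((dJ 0).comp h) hkerε).comp (eW.symm : W →ₗ[R] _)
    have hkbar : ∀ x : P 0, kbar (ε x) = dJ 0 (h x) := by
      intro x
      have h1 : eW.symm (ε x) = Submodule.Quotient.mk x := by
        apply eW.injective
        rw [eW.apply_symm_apply]
        rfl
      show (Submodule.liftQ (LinearMap.ker ε) ((dJ 0).comp h) hkerε) (eW.symm (ε x)) = _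
      rw [h1]
      rfl
    have hdkbar : (dJ 1).comp kbar = 0 := by
      ext w
      obtain ⟨x, rfl⟩ := hε w
      simp only [LinearMap.comp_apply, hkbar x, LinearMap.zero_apply]
      exact (hexJ 0).apply_apply_eq_zero (h x)
    obtain ⟨ℓ, hℓ⟩ := hHom 0 kbar hdkbar
    have hu0 : ∀ x, h x - ℓ (ε x) ∈ LinearMap.range ι := by
      intro x
      refine (hexι _).mp ?_
      have h1 : dJ 0 (ℓ (ε x)) = kbar (ε x) := LinearMap.congr_fun hℓ (ε x)
      rw [map_sub, h1, hkbar x, sub_self]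
    obtain ⟨g, hg⟩ := pullback_aux ι hι (h - ℓ.comp ε) (fun x => hu0 x)
    refine ⟨g, fun x => ?_⟩
    apply hι
    have h3 : ε (d 0 x) = 0 := hex0.apply_apply_eq_zero x
    rw [hg (d 0 x)]
    simp only [LinearMap.sub_apply, LinearMap.comp_apply, h3, map_zero, sub_zero, hh x]
  | succ j IH =>
    intro M J dJ ι hJinj hι hexι hexJ hHom f hf
    obtain ⟨h, hh⟩ := extend_aux (hJinj 0) (d (j + 2)) (d (j + 1)) (hex (j + 1)) (ι.comp f)
      (fun x => by simp [hf x])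
    -- h : P (j+1) →ₗ J 0 with h (d (j+1) x) = ι (f x)
    have hmem : ∀ x : P (j + 1), dJ 0 (h x) ∈ LinearMap.ker (dJ (0 + 1)) := by
      intro x
      exact (hexJ 0).apply_apply_eq_zero (h x)
    let M' : ModuleCat.{u} R := ModuleCat.of R (LinearMap.ker (dJ (0 + 1)))
    let ι' : M' →ₗ[R] J (0 + 1) := (LinearMap.ker (dJ (0 + 1))).subtype
    let f' : P (j + 1) →ₗ[R] M' :=
      ((dJ 0).comp h).codRestrict (LinearMap.ker (dJ (0 + 1))) hmem
    have hf' : ∀ x, f' (d (j + 1) x) = 0 := by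
      intro x
      apply Subtype.ext
      show dJ 0 (h (d (j + 1) x)) = 0
      rw [hh x]
      exact hexι.apply_apply_eq_zero (f x)
    have hexι' : Function.Exact ι' (dJ (0 + 1)) := by
      intro y
      constructor
      · intro hy
        exact ⟨⟨y, hy⟩, rfl⟩
      · rintro ⟨⟨z, hz⟩, rfl⟩
        exact hz
    obtain ⟨g', hg'⟩ := IH M' (fun n => J (n + 1)) (fun n => dJ (n + 1)) ι'
      (fun n => hJinj (n + 1)) (Submodule.injective_subtype _) hexι'
      (fun n => hexJ (n + 1)) (fun n k hk => hHom (n + 1) k hk) f' hf'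
    -- lift ι' ∘ g' through dJ 0
    have hmem2 : ∀ x : P j, ι' (g' x) ∈ LinearMap.range (dJ 0) := by
      intro x
      refine ((hexJ 0) _).mp ?_
      exact LinearMap.mem_ker.mp (g' x).2
    haveI := hP j
    obtain ⟨k, hk⟩ := Module.projective_lifting_property (dJ 0).rangeRestrict
      ((ι'.comp g').codRestrict (LinearMap.range (dJ 0)) hmem2)
      (LinearMap.surjective_rangeRestrict (dJ 0))
    have hkap : ∀ x : P j, dJ 0 (k x) = ι' (g' x) := by
      intro x
      exact congrArg Subtype.val (LinearMap.congr_fun hk x)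
    have hu0 : ∀ x : P (j + 1), h x - k (d j x) ∈ LinearMap.range ι := by
      intro x
      refine (hexι _).mp ?_
      have h1 : ι' (g' (d j x)) = dJ 0 (h x) := by rw [hg' x]; rfl
      rw [map_sub, hkap (d j x), h1, sub_self]
    obtain ⟨g, hg⟩ := pullback_aux ι hι (h - k.comp (d j)) (fun x => hu0 x)
    refine ⟨g, fun x => ?_⟩
    apply hι
    rw [hg (d (j + 1) x)]
    have h2 : d j (d (j + 1) x) = 0 := (hex j).apply_apply_eq_zero x
    simp only [LinearMap.sub_apply, LinearMap.comp_apply, h2, map_zero, sub_zero, hh x]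


lemma subsingleton_of_isZero {S : Type} [Ring S] {X : ModuleCat.{u} S}
    (h : Limits.IsZero X) : Subsingleton X := by
  have hid : 𝟙 X = 0 := h.eq_of_src _ _
  constructor
  intro a b
  have ha : a = (𝟙 X) a := rfl
  have hb : b = (𝟙 X) b := rfl
  rw [ha, hb, hid]
  rfl

end GWIAux

open GWIAux in
/-- Every Gorenstein weak injective module `M` satisfies `Ext^i_R(W, M) = 0` for every
weak injective module `W` and every `i ≥ 1`. -/
theorem gorensteinWeakInjective_extVanish (M : ModuleCat.{u} R)
    (hM : GorensteinWeakInjective R M) :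
    ∀ W : ModuleCat.{u} R, WeakInjective R W → ∀ i : ℕ, 1 ≤ i → ExtVanish R i W M := by
  intro W hW i hi
  obtain ⟨j, rfl⟩ : ∃ j, i = j + 1 := ⟨i - 1, (Nat.succ_pred_eq_of_pos hi).symm⟩
  obtain ⟨I, dI, π, ⟨hIinj, hIex, hIhomAll⟩, hπsurj, hπex⟩ := hM
  have hIhom := fun n => hIhomAll W hW n
  classical
  -- construct the embedding ι : M →ₗ I 1
  have hker : LinearMap.ker π ≤ LinearMap.ker (dI 0) := by
    intro x hx
    obtain ⟨y, rfl⟩ := (hπex x).mp hx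
    exact (hIex (-1)).apply_apply_eq_zero y
  let eM : (I 0 ⧸ LinearMap.ker π) ≃ₗ[R] M := π.quotKerEquivOfSurjective hπsurj
  let ι : M →ₗ[R] I (0 + 1) :=
    (Submodule.liftQ (LinearMap.ker π) (dI 0) hker).comp (eM.symm : M →ₗ[R] _)
  have hιπ : ∀ x : I 0, ι (π x) = dI 0 x := by
    intro x
    have h1 : eM.symm (π x) = Submodule.Quotient.mk x := by
      apply eM.injective
      rw [eM.apply_symm_apply]
      rfl
    show (Submodule.liftQ (LinearMap.ker π) (dI 0) hker) (eM.symm (π x)) = _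
    rw [h1]
    rfl
  have hι : Function.Injective ι := by
    intro a b hab
    obtain ⟨x, rfl⟩ := hπsurj a
    obtain ⟨y, rfl⟩ := hπsurj b
    have : dI 0 (x - y) = 0 := by
      rw [map_sub, ← hιπ, ← hιπ, hab, sub_self]
    obtain ⟨z, hz⟩ := ((hIex (-1)) (x - y)).mp this
    have : π (x - y) = 0 := by
      rw [← hz]
      exact hπex.apply_apply_eq_zero z
    rw [map_sub, sub_eq_zero] at this
    exact this
  have hexι : Function.Exact ι (dI (0 + 1)) := by
    intro y
    constructor
    · intro hy
      obtain ⟨z, hz⟩ := ((hIex 0) y).mp hy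
      exact ⟨π z, by rw [hιπ z, hz]⟩
    · rintro ⟨m, rfl⟩
      obtain ⟨x, rfl⟩ := hπsurj m
      rw [hιπ x]
      exact ((hIex 0) (dI 0 x)).mpr ⟨x, rfl⟩
  -- projective resolution of W
  let P : ProjectiveResolution W := (HasProjectiveResolution.out (Z := W)).some
  show Subsingleton _
  have hiso := P.isoExt (R := ℤ) (j + 1) M
  suffices hz : Limits.IsZero ((P.complex.linearYonedaObj ℤ M).homology (j + 1)) by
    exact
      have : Subsingleton ((P.complex.linearYonedaObj ℤ M).homology (j + 1)) :=
        subsingleton_of_isZero hz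
      have hinv : ∀ z, hiso.inv (hiso.hom z) = z := fun z => by
        have h1 : (hiso.hom ≫ hiso.inv) z = z := by
          rw [hiso.hom_inv_id]
          rfl
        exact h1
      ⟨fun a b => by
        rw [← hinv a, ← hinv b, Subsingleton.elim (hiso.hom a) (hiso.hom b)]⟩
  rw [← HomologicalComplex.exactAt_iff_isZero_homology]
  rw [HomologicalComplex.exactAt_iff' _ j (j + 1) (j + 2)
    ((ComplexShape.up ℕ).prev_eq' (by simp)) ((ComplexShape.up ℕ).next_eq' (by simp))]
  rw [ShortComplex.moduleCat_exact_iff]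
  intro x hx
  -- interpret hx
  have hgx : ∀ z : (P.complex.linearYonedaObj ℤ M).X (j + 1),
      (P.complex.linearYonedaObj ℤ M).d (j + 1) (j + 2) z =
        CategoryStruct.comp (P.complex.d (j + 2) (j + 1)) z := by
    intro z
    rw [ChainComplex.linearYonedaObj_d]
    rfl
  have hx2 : (CategoryStruct.comp (P.complex.d (j + 2) (j + 1)) x :
      P.complex.X (j + 2) ⟶ M) = 0 := by
    rw [← hgx x]
    exact hx
  let x' : P.complex.X (j + 1) ⟶ M := x
  have hx2' : (P.complex.d (j + 2) (j + 1) ≫ x' : P.complex.X (j + 2) ⟶ M) = 0 := hx2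
  have hx' : ∀ y : P.complex.X (j + 2),
      x'.hom ((P.complex.d (j + 2) (j + 1)).hom y) = 0 :=
    fun y => LinearMap.congr_fun (congrArg ModuleCat.Hom.hom hx2') y
  -- hypotheses of the key lemma
  have hPproj : ∀ n, Module.Projective R (P.complex.X n) := by
    intro n
    have hn : CategoryTheory.Projective (P.complex.X n) := P.projective n
    exact (IsProjective.iff_projective _).mpr hn
  have hεsurj : Function.Surjective (P.π.f 0).hom :=
    (ModuleCat.epi_iff_surjective _).mp inferInstance
  have hex0 : Function.Exact (P.complex.d (0 + 1) 0).hom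
      (P.π.f 0).hom := by
    have h := P.exact₀
    rw [ShortComplex.ShortExact.moduleCat_exact_iff_function_exact] at h
    exact h
  have hexn : ∀ n : ℕ, Function.Exact
      (P.complex.d (n + 1 + 1) (n + 1)).hom
      (P.complex.d (n + 1) n).hom := by
    intro n
    have h := P.exact_succ n
    rw [ShortComplex.ShortExact.moduleCat_exact_iff_function_exact] at h
    exact h
  have hHom : ∀ (n : ℤ) (k : W →ₗ[R] I (n + 1 + 1)), (dI (n + 1 + 1)).comp k = 0 →
      ∃ ℓ : W →ₗ[R] I (n + 1), (dI (n + 1)).comp ℓ = k := by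
    intro n k hk
    obtain ⟨ℓ, hℓ⟩ := ((hIhom (n + 1)) k).mp hk
    exact ⟨ℓ, hℓ⟩
  obtain ⟨g, hg⟩ := key (fun n => P.complex.X n) (fun n => (P.complex.d (n + 1) n).hom)
    (P.π.f 0).hom hPproj hεsurj hex0 hexn j M (fun n => I (n + 1)) (fun n => dI (n + 1)) ι
    (fun n => hIinj (n + 1)) hι hexι (fun n => hIex (n + 1)) hHom x'.hom hx'
  refine ⟨ModuleCat.ofHom g, ?_⟩
  show (P.complex.linearYonedaObj ℤ M).d j (j + 1) (ModuleCat.ofHom g) = x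
  have hgx2 : (P.complex.linearYonedaObj ℤ M).d j (j + 1) (ModuleCat.ofHom g) =
      CategoryStruct.comp (P.complex.d (j + 1) j) (ModuleCat.ofHom g) := by
    rw [ChainComplex.linearYonedaObj_d]
    rfl
  rw [hgx2]
  exact ModuleCat.hom_ext (LinearMap.ext hg)
end

section
/- A Gorenstein weak injective R-module is either injective or has infinite weak injective dimension. Consequently, the intersection of the class of Gorenstein weak injective modules with the class of modules of finite weak injective dimension is exactly the class of injective modules. -/
open CategoryTheory

universe u

namespace GWIAux

open CategoryTheory

variable {R : Type u} [Ring R]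

lemma subsingleton_iff_isZero {S : Type*} [Ring S] (A : ModuleCat.{u} S) :
    Subsingleton A ↔ Limits.IsZero A := by
  constructor
  · intro h; exact ModuleCat.isZero_of_subsingleton A
  · intro h
    refine ⟨fun a b => ?_⟩
    have : (𝟙 A) = (0 : A ⟶ A) := h.eq_of_src _ _
    calc a = (𝟙 A) a := rfl
    _ = (0 : A ⟶ A) a := by rw [this]
    _ = (0 : A ⟶ A) b := by
          show (0 : A →ₗ[S] A) a = (0 : A →ₗ[S] A) b
          simp
    _ = (𝟙 A) b := by rw [this]
    _ = b := rfl

lemma ext_succ_char (N M : ModuleCat.{u} R) (P : ProjectiveResolution N) (m : ℕ) :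
    Subsingleton (((Ext ℤ (ModuleCat.{u} R) (m+1)).obj (Opposite.op N)).obj M) ↔
      ∀ φ : P.complex.X (m+1) ⟶ M, P.complex.d (m+2) (m+1) ≫ φ = 0 →
        ∃ ψ : P.complex.X m ⟶ M, P.complex.d (m+1) m ≫ ψ = φ := by
  have e := P.isoExt (R := ℤ) (m+1) M
  set K := P.complex.linearYonedaObj ℤ M with hK
  have h1 : Subsingleton (((Ext ℤ (ModuleCat.{u} R) (m+1)).obj (Opposite.op N)).obj M) ↔
      Subsingleton (K.homology (m+1)) :=
    Equiv.subsingleton_congr ((forget _).mapIso e).toEquiv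
  rw [h1, subsingleton_iff_isZero, ← HomologicalComplex.exactAt_iff_isZero_homology,
    K.exactAt_iff' m (m+1) (m+2) (by simp) (by simp), ShortComplex.moduleCat_exact_iff]
  constructor
  · intro h φ hφ
    obtain ⟨ψ, hψ⟩ := h φ (by exact hφ)
    exact ⟨ψ, by exact hψ⟩
  · intro h φ hφ
    obtain ⟨ψ, hψ⟩ := h φ (by exact hφ)
    exact ⟨ψ, by exact hψ⟩

lemma inj_exact_char (N M : ModuleCat.{u} R) (hM : Module.Injective R M)
    (P : ProjectiveResolution N) (m : ℕ) :
    ∀ φ : P.complex.X (m+1) ⟶ M, P.complex.d (m+2) (m+1) ≫ φ = 0 →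
      ∃ ψ : P.complex.X m ⟶ M, P.complex.d (m+1) m ≫ ψ = φ := by
  intro φ hφ
  have hex := (P.complex.exactAt_iff' (m+2) (m+1) m (by simp) (by simp)).mp
    (P.complex_exactAt_succ m)
  rw [ShortComplex.moduleCat_exact_iff] at hex
  set f : P.complex.X (m+1) →ₗ[R] P.complex.X m := (P.complex.d (m+1) m).hom with hf
  have hle : LinearMap.ker f ≤ LinearMap.ker (show P.complex.X (m+1) →ₗ[R] M from φ.hom) := by
    intro x hx
    obtain ⟨y, hy⟩ := hex x hx
    have : φ (P.complex.d (m+2) (m+1) y) = 0 := by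
      have := congrArg (fun g => (show P.complex.X (m+2) →ₗ[R] M from g.hom) y) hφ
      exact this
    rw [LinearMap.mem_ker]
    have hx' : P.complex.d (m+2) (m+1) y = x := hy
    rw [← hx']; exact this
  set φ' : LinearMap.range f →ₗ[R] M :=
    (Submodule.liftQ (LinearMap.ker f) _ hle).comp (f.quotKerEquivRange).symm.toLinearMap with hφ'
  obtain ⟨ψ, hψ⟩ := hM.out (LinearMap.range f).subtype (Submodule.injective_subtype _) φ'
  refine ⟨ModuleCat.ofHom ψ, ?_⟩
  ext x
  have h1 : ψ (f x) = φ' ⟨f x, LinearMap.mem_range_self f x⟩ :=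
    hψ ⟨f x, LinearMap.mem_range_self f x⟩
  have h2 : φ' ⟨f x, LinearMap.mem_range_self f x⟩ = φ x := by
    rw [hφ']
    simp [LinearMap.quotKerEquivRange_symm_apply_image]
  show ψ (f x) = φ x
  rw [h1, h2]

lemma ext_vanish_of_injective (N M : ModuleCat.{u} R) (hM : Module.Injective R M) (m : ℕ) :
    Subsingleton (((Ext ℤ (ModuleCat.{u} R) (m+1)).obj (Opposite.op N)).obj M) := by
  obtain P := (HasProjectiveResolution.out (Z := N)).some
  exact (ext_succ_char N M P m).mpr (inj_exact_char N M hM P m)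

lemma shift_char (N : ModuleCat.{u} R) (B C : ModuleCat.{u} R) (hB : Module.Injective R B)
    (f : B ⟶ C) (hf : Function.Surjective f) (A : Submodule R B)
    (hker : LinearMap.ker (show B →ₗ[R] C from f.hom) = A) (m : ℕ)
    (hA : Subsingleton (((Ext ℤ (ModuleCat.{u} R) (m+2)).obj (Opposite.op N)).obj
      (ModuleCat.of R A))) :
    Subsingleton (((Ext ℤ (ModuleCat.{u} R) (m+1)).obj (Opposite.op N)).obj C) := by
  obtain P := (HasProjectiveResolution.out (Z := N)).some
  rw [ext_succ_char N C P m]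
  intro φ hφ
  haveI : Epi f := (ModuleCat.epi_iff_surjective f).mpr hf
  set φt : P.complex.X (m+1) ⟶ B := Projective.factorThru φ f with hφt
  have hφtf : φt ≫ f = φ := Projective.factorThru_comp φ f
  have hmem : ∀ y, (P.complex.d (m+2) (m+1) ≫ φt) y ∈ A := by
    intro y
    rw [← hker, LinearMap.mem_ker]
    have : ((P.complex.d (m+2) (m+1) ≫ φt) ≫ f) y = (P.complex.d (m+2) (m+1) ≫ φ) y := by
      rw [Category.assoc, hφtf]
    rw [hφ] at this
    simpa using this
  set α : P.complex.X (m+2) ⟶ ModuleCat.of R A :=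
    ModuleCat.ofHom (LinearMap.codRestrict A (show P.complex.X (m+2) →ₗ[R] B from (P.complex.d (m+2) (m+1) ≫ φt).hom)
      hmem) with hα
  have hαc : P.complex.d (m+3) (m+2) ≫ α = 0 := by
    ext x
    show (P.complex.d (m+3) (m+2) ≫ P.complex.d (m+2) (m+1) ≫ φt) x = 0
    rw [← Category.assoc, HomologicalComplex.d_comp_d, Limits.zero_comp]
    exact LinearMap.zero_apply x
  obtain ⟨β, hβ⟩ := (ext_succ_char N (ModuleCat.of R A) P (m+1)).mp hA α hαc
  have h2 : P.complex.d (m+2) (m+1) ≫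
      (φt - β ≫ ((ModuleCat.ofHom A.subtype : ModuleCat.of R A ⟶ B))) = 0 := by
    ext y
    have hb : β ((P.complex.d (m+2) (m+1)) y) = α y := by
      have := congrArg (fun g => (show P.complex.X (m+2) →ₗ[R] ModuleCat.of R A from g.hom) y) hβ
      simpa using this
    show (P.complex.d (m+2) (m+1) ≫ φt) y - A.subtype (β ((P.complex.d (m+2) (m+1)) y)) = 0
    rw [hb]
    show (P.complex.d (m+2) (m+1) ≫ φt) y - ((P.complex.d (m+2) (m+1) ≫ φt) y) = 0
    simp
  obtain ⟨ψ', hψ'⟩ := inj_exact_char N B hB P m (φt - β ≫ ((ModuleCat.ofHom A.subtype : ModuleCat.of R A ⟶ B))) h2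
  refine ⟨ψ' ≫ f, ?_⟩
  have hsf : ((ModuleCat.ofHom A.subtype : ModuleCat.of R A ⟶ B)) ≫ f = 0 := by
    ext a
    show f (A.subtype a) = 0
    exact hker.ge a.2
  rw [← Category.assoc, hψ', Preadditive.sub_comp, hφtf, Category.assoc, hsf]
  simp

lemma ext_subsingleton_of_iso (N : ModuleCat.{u} R) (k : ℕ) {M M' : ModuleCat.{u} R} (e : M ≅ M')
    (h : Subsingleton (((Ext ℤ (ModuleCat.{u} R) k).obj (Opposite.op N)).obj M)) :
    Subsingleton (((Ext ℤ (ModuleCat.{u} R) k).obj (Opposite.op N)).obj M') :=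
  (Equiv.subsingleton_congr
    ((forget _).mapIso (((Ext ℤ (ModuleCat.{u} R) k).obj (Opposite.op N)).mapIso e)).toEquiv).mp h

lemma injective_of_retract {B Q : Type u} [AddCommGroup B] [Module R B] [AddCommGroup Q]
    [Module R Q] (r : B →ₗ[R] Q) (s : Q →ₗ[R] B) (hrs : ∀ x, r (s x) = x)
    (hB : Module.Injective R B) : Module.Injective R Q := by
  refine ⟨fun X Y _ _ _ _ f hf g => ?_⟩
  obtain ⟨h, hh⟩ := hB.out f hf (s.comp g)
  refine ⟨r.comp h, fun x => ?_⟩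
  have := hh x
  simp only [LinearMap.comp_apply] at this ⊢
  rw [this, hrs]

end GWIAux


variable (R : Type u) [Ring R]

namespace GWIAux2

open CategoryTheory

variable {R : Type u} [Ring R]

lemma exact_id_zero {M M' : Type u} [AddCommGroup M] [Module R M] [AddCommGroup M'] [Module R M'] :
    Function.Exact (LinearMap.id : M →ₗ[R] M) (0 : M →ₗ[R] M') := by
  intro y
  constructor
  · intro _; exact ⟨y, rfl⟩
  · intro _; simp

lemma exact_zero_id {M M' : Type u} [AddCommGroup M] [Module R M] [AddCommGroup M'] [Module R M'] :
    Function.Exact (0 : M' →ₗ[R] M) (LinearMap.id : M →ₗ[R] M) := by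
  intro y
  constructor
  · intro h
    have : y = 0 := h
    exact ⟨0, by simp [this]⟩
  · rintro ⟨x, hx⟩
    show y = 0
    rw [← hx]; rfl

lemma weakInjective_of_injective (E : ModuleCat.{u} R) (hE : Module.Injective R E) :
    WeakInjective R E :=
  fun N _ => GWIAux.ext_vanish_of_injective N E hE 0

lemma gwi_of_injective (M : ModuleCat.{u} R) (hM : Module.Injective R M) :
    GorensteinWeakInjective R M := by
  refine ⟨fun _ => M, fun n => if n % 2 = 0 then LinearMap.id else 0, LinearMap.id,
    ⟨fun _ => hM, ?_, ?_⟩, Function.surjective_id, ?_⟩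
  · intro n
    by_cases h : n % 2 = 0
    · have h' : ¬ ((n + 1) % 2 = 0) := by omega
      simp only [if_pos h, if_neg h']
      exact exact_id_zero
    · have h' : (n + 1) % 2 = 0 := by omega
      simp only [if_neg h, if_pos h']
      exact exact_zero_id
  · intro W _ n
    by_cases h : n % 2 = 0
    · have h' : ¬ ((n + 1) % 2 = 0) := by omega
      simp only [if_pos h, if_neg h']
      intro y
      constructor
      · intro _
        exact ⟨y, by ext x; simp⟩
      · intro _
        show (0 : M →ₗ[R] M).comp y = 0
        ext x; simp
    · have h' : (n + 1) % 2 = 0 := by omega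
      simp only [if_neg h, if_pos h']
      intro y
      constructor
      · intro hy
        have : y = 0 := by
          ext x
          have := congrArg (fun g => (show (W : Type u) →ₗ[R] M from g) x) hy
          simpa using this
        exact ⟨0, by rw [this]; ext x; simp⟩
      · rintro ⟨x, hx⟩
        show LinearMap.id.comp y = 0
        rw [← hx]; ext z; simp
  · show Function.Exact (if ((-1 : ℤ)) % 2 = 0 then (LinearMap.id : M →ₗ[R] M) else 0)
      (LinearMap.id : M →ₗ[R] M)
    rw [if_neg (by decide)]
    exact exact_zero_id

end GWIAux2


namespace GWIAux3

open CategoryTheory GWIAux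

variable {R : Type u} [Ring R]

set_option maxHeartbeats 1000000 in
lemma hard (M : ModuleCat.{u} R) (hG : GorensteinWeakInjective R M) (n : ℕ)
    (hW : WidLE R M n) : Module.Injective R M := by
  obtain ⟨T, d, π, ⟨hinj, hex, hhom⟩, hπs, hπe⟩ := hG
  -- kernel facts
  have hkerd : ∀ j : ℤ, LinearMap.ker (d (j+1)) = LinearMap.range (d j) :=
    fun j => LinearMap.exact_iff.mp (hex j)
  have hkerπ : LinearMap.ker π = LinearMap.ker (d 0) := by
    have h1 : LinearMap.ker π = LinearMap.range (d (-1)) := LinearMap.exact_iff.mp hπe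
    have h2 : LinearMap.ker (d 0) = LinearMap.range (d (-1)) :=
      LinearMap.exact_iff.mp (hex (-1))
    rw [h1, h2]
  -- M is isomorphic to range (d 0)
  have e : (M : Type u) ≃ₗ[R] ↥(LinearMap.range (d 0)) :=
    ((π.quotKerEquivOfSurjective hπs).symm.trans
      ((Submodule.quotEquivOfEq _ _ hkerπ).trans (d 0).quotKerEquivRange))
  -- dimension shifting chain
  have claim1 : ∀ N : ModuleCat.{u} R, SuperFinitelyPresented R N → ∀ j : ℕ, j ≤ n →
      Subsingleton (((Ext ℤ (ModuleCat.{u} R) (n - j + 1)).obj (Opposite.op N)).obj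
        (ModuleCat.of R ↥(LinearMap.range (d (j : ℤ))))) := by
    intro N hN j
    induction j with
    | zero =>
      intro _
      have h0 : Subsingleton (((Ext ℤ (ModuleCat.{u} R) (n + 1)).obj (Opposite.op N)).obj M) :=
        hW N hN
      exact ext_subsingleton_of_iso N (n+1) ((e.toModuleIso : M ≅ _)) h0
    | succ j ih =>
      intro hj
      have hA := ih (by omega)
      rw [show n - j + 1 = (n - (j+1) + 1) + 1 by omega] at hA
      rw [show (((j+1 : ℕ)) : ℤ) = ((j : ℕ) : ℤ) + 1 by push_cast; ring]
      exact shift_char N (T ((j : ℤ) + 1))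
        (ModuleCat.of R ↥(LinearMap.range (d ((j : ℤ) + 1))))
        (hinj _) (ModuleCat.ofHom (d ((j : ℤ) + 1)).rangeRestrict)
        (LinearMap.surjective_rangeRestrict _)
        (LinearMap.range (d (j : ℤ)))
        ((LinearMap.ker_rangeRestrict _).trans (hkerd (j : ℤ))) (n - (j+1)) hA
  -- the splitting step
  have step : ∀ j : ℤ, WeakInjective R (ModuleCat.of R ↥(LinearMap.range (d (j+1)))) →
      Module.Injective R ↥(LinearMap.range (d (j+1))) ∧
      Module.Injective R ↥(LinearMap.range (d j)) := by
    intro j hWI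
    set W := ModuleCat.of R ↥(LinearMap.range (d (j+1))) with hWdefW
    have hhw := hhom W hWI (j+1)
    set ι : W →ₗ[R] T (j+1+1) := (LinearMap.range (d (j+1))).subtype with hι
    have h0 : (d (j+1+1)).comp ι = 0 := by
      ext y
      exact (hex (j+1) y.1).mpr (LinearMap.mem_range.mp y.2)
    obtain ⟨s, hs⟩ := (hhw ι).mp h0
    set r : T (j+1) →ₗ[R] W := (d (j+1)).rangeRestrict with hr
    have hdsx : ∀ x : W, d (j+1) (s x) = x.1 := by
      intro x
      have := congrArg (fun g => (show (W : Type u) →ₗ[R] T (j+1+1) from g) x) hs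
      exact this
    have hrs : ∀ x : W, r (s x) = x := by
      intro x
      apply Subtype.ext
      exact hdsx x
    have inj1 : Module.Injective R ↥(LinearMap.range (d (j+1))) :=
      GWIAux.injective_of_retract r s hrs (hinj (j+1))
    -- second retraction
    set u : T (j+1) →ₗ[R] T (j+1) := LinearMap.id - s.comp r with hu
    have hmemu : ∀ x : T (j+1), u x ∈ LinearMap.range (d j) := by
      intro x
      rw [← hkerd j, LinearMap.mem_ker]
      have : d (j+1) (u x) = d (j+1) x - d (j+1) (s (r x)) := by
        simp [hu, map_sub]
      rw [this, hdsx (r x)]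
      show d (j+1) x - ((d (j+1)).rangeRestrict x : T (j+1+1)) = 0
      simp
    set r' : T (j+1) →ₗ[R] ↥(LinearMap.range (d j)) :=
      LinearMap.codRestrict _ u hmemu with hr'
    have hrs' : ∀ q : ↥(LinearMap.range (d j)), r' ((LinearMap.range (d j)).subtype q) = q := by
      intro q
      apply Subtype.ext
      show u (q : T (j+1)) = (q : T (j+1))
      have hq0 : d (j+1) (q : T (j+1)) = 0 := by
        have : (q : T (j+1)) ∈ LinearMap.ker (d (j+1)) := by
          rw [hkerd j]; exact q.2
        exact this
      have hrq : r (q : T (j+1)) = 0 := by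
        apply Subtype.ext
        show d (j+1) (q : T (j+1)) = (0 : W).1
        rw [hq0]; rfl
      show (q : T (j+1)) - s (r (q : T (j+1))) = (q : T (j+1))
      rw [hrq]
      simp
    have inj2 : Module.Injective R ↥(LinearMap.range (d j)) :=
      GWIAux.injective_of_retract r' (LinearMap.range (d j)).subtype hrs' (hinj (j+1))
    exact ⟨inj1, inj2⟩
  -- weak injectivity of range (d n)
  have hWIn : WeakInjective R (ModuleCat.of R ↥(LinearMap.range (d (n : ℤ)))) := by
    intro N hN
    have := claim1 N hN n le_rfl
    rw [show n - n + 1 = 1 by omega] at this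
    exact this
  -- downward induction
  have down : ∀ i : ℕ, i ≤ n →
      WeakInjective R (ModuleCat.of R ↥(LinearMap.range (d ((n - i : ℕ) : ℤ)))) := by
    intro i
    induction i with
    | zero => intro _; exact hWIn
    | succ i ih =>
      intro hi
      have h := ih (by omega)
      have hcast : ((n - i : ℕ) : ℤ) = ((n - (i+1) : ℕ) : ℤ) + 1 := by omega
      rw [hcast] at h
      have h2 := (step _ h).2
      exact GWIAux2.weakInjective_of_injective _ h2
  have hfin := down n le_rfl
  rw [show ((n - n : ℕ) : ℤ) = (-1 : ℤ) + 1 by omega] at hfin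
  have hrange0' := (step (-1) hfin).1
  have hrange0 : Module.Injective R ↥(LinearMap.range (d 0)) := by
    rw [show (0 : ℤ) = (-1 : ℤ) + 1 by omega]
    exact hrange0'
  exact GWIAux.injective_of_retract e.symm.toLinearMap e.toLinearMap
    (fun x => e.symm_apply_apply x) hrange0

end GWIAux3


/-- A Gorenstein weak injective module is either injective or has infinite weak injective
dimension; consequently `GWI ∩ {finite weak injective dimension} = {injectives}`. -/
theorem gorensteinWeakInjective_injective_or_wid_infinite :
    (∀ M : ModuleCat.{u} R, GorensteinWeakInjective R M →
      Module.Injective R M ∨ ¬ ∃ n : ℕ, WidLE R M n) ∧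
    (∀ M : ModuleCat.{u} R,
      (GorensteinWeakInjective R M ∧ ∃ n : ℕ, WidLE R M n) ↔ Module.Injective R M) := by
  have hard : ∀ M : ModuleCat.{u} R, GorensteinWeakInjective R M → (∃ n : ℕ, WidLE R M n) →
      Module.Injective R M := by
    rintro M hG ⟨n, hn⟩
    exact GWIAux3.hard M hG n hn
  constructor
  · intro M hG
    by_cases h : ∃ n : ℕ, WidLE R M n
    · exact Or.inl (hard M hG h)
    · exact Or.inr h
  · intro M
    constructor
    · rintro ⟨hG, h⟩
      exact hard M hG h
    · intro hI
      exact ⟨GWIAux2.gwi_of_injective M hI, 0,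
        fun N hN => GWIAux.ext_vanish_of_injective N M hI 0⟩
end

section
/- An R-module is injective if and only if it is both weak injective and Gorenstein weak injective. -/
open CategoryTheory

universe u

variable (R : Type u) [Ring R]

/-- A retract (direct summand) of an injective module is injective. -/
lemma aux_injective_of_retract {R : Type u} [Ring R] {M I : Type u}
    [AddCommGroup M] [Module R M] [AddCommGroup I] [Module R I]
    (hI : Module.Injective R I) (s : M →ₗ[R] I) (p : I →ₗ[R] M)
    (hps : ∀ m, p (s m) = m) : Module.Injective R M := by
  constructor
  intro X Y _ _ _ _ f hf g
  obtain ⟨h, hh⟩ := hI.out f hf (s.comp g)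
  refine ⟨p.comp h, fun x => ?_⟩
  simp [hh x, hps]

/-- `Ext^1(N, M)` vanishes when `M` is injective. -/
lemma aux_extVanish_of_injective (N M : ModuleCat.{u} R)
    (hM : Module.Injective R M) : ExtVanish R 1 N M := by
  let P : CategoryTheory.ProjectiveResolution N := CategoryTheory.ProjectiveResolution.of N
  have e := P.isoExt (R := ℤ) 1 M
  have hPex := P.complex_exactAt_succ 0
  rw [HomologicalComplex.exactAt_iff' _ 2 1 0 (by simp) (by simp),
    ShortComplex.moduleCat_exact_iff_range_eq_ker] at hPex
  have hexact : (P.complex.linearYonedaObj ℤ M).ExactAt 1 := by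
    rw [HomologicalComplex.exactAt_iff' _ 0 1 2 (by simp) (by simp),
      ShortComplex.moduleCat_exact_iff]
    intro f hf
    dsimp [ChainComplex.linearYonedaObj] at f hf ⊢
    simp only [HomologicalComplex.shortComplexFunctor'_obj_f,
      HomologicalComplex.shortComplexFunctor'_obj_g] at hPex
    set d10 := (P.complex.d 1 0).hom with hd10
    let f' : ↑(P.complex.X 1) →ₗ[R] ↑M := (show P.complex.X 1 ⟶ M from f).hom
    have hker : LinearMap.ker d10 ≤ LinearMap.ker f' := by
      intro x hx
      rw [LinearMap.mem_ker] at hx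
      have hx2 : x ∈ LinearMap.range (P.complex.d 2 1).hom := by
        exact (SetLike.ext_iff.mp hPex x).2 hx
      obtain ⟨y, rfl⟩ := hx2
      have hf' : P.complex.d 2 1 ≫ (show P.complex.X 1 ⟶ M from f) = 0 := hf
      have := LinearMap.congr_fun (congr_arg ModuleCat.Hom.hom hf') y
      exact this
    obtain ⟨h, hh⟩ := hM.out (LinearMap.range d10).subtype (Submodule.injective_subtype _)
      ((Submodule.liftQ (LinearMap.ker d10) f' hker).comp
        d10.quotKerEquivRange.symm.toLinearMap)
    refine ⟨ModuleCat.ofHom h, ?_⟩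
    show P.complex.d 1 0 ≫ ModuleCat.ofHom h = (show P.complex.X 1 ⟶ M from f)
    apply ModuleCat.hom_ext
    apply LinearMap.ext
    intro x
    have e1 : d10.quotKerEquivRange (Submodule.Quotient.mk x)
        = ⟨d10 x, LinearMap.mem_range_self _ x⟩ := rfl
    have h2 := hh (d10.quotKerEquivRange (Submodule.Quotient.mk x))
    rw [LinearMap.comp_apply, LinearEquiv.coe_coe, LinearEquiv.symm_apply_apply,
      Submodule.liftQ_apply] at h2
    rw [e1] at h2
    simpa using h2
  have hz := (HomologicalComplex.exactAt_iff_isZero_homology _ 1).1 hexact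
  have hsub : Subsingleton ((P.complex.linearYonedaObj ℤ M).homology 1) := by
    constructor
    intro a b
    have h0 : (𝟙 ((P.complex.linearYonedaObj ℤ M).homology 1)) = 0 := hz.eq_of_src _ _
    have hzero : ∀ x : ((P.complex.linearYonedaObj ℤ M).homology 1), x = 0 := by
      intro x
      have hx : (𝟙 ((P.complex.linearYonedaObj ℤ M).homology 1)) x
          = (0 : (P.complex.linearYonedaObj ℤ M).homology 1 ⟶ _) x := by rw [h0]
      simpa using hx
    rw [hzero a, hzero b]
  exact Equiv.subsingleton ((CategoryTheory.forget (ModuleCat ℤ)).mapIso e).toEquiv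

/-- An injective module is Gorenstein weak injective. -/
lemma aux_gwi_of_injective (M : ModuleCat.{u} R) (hM : Module.Injective R M) :
    GorensteinWeakInjective R M := by
  refine ⟨fun _ => M, fun n => if Even n then LinearMap.id else 0, LinearMap.id,
    ⟨fun _ => hM, ?_, ?_⟩, fun x => ⟨x, rfl⟩, ?_⟩
  · intro n
    by_cases hn : Even n
    · simp only [if_pos hn, if_neg (show ¬ Even (n+1) by simpa [Int.even_add_one] using hn)]
      intro y; simp [eq_comm]
    · simp only [if_neg hn, if_pos (Int.even_add_one.2 hn)]
      intro y; simp [eq_comm]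
  · intro W _ n
    by_cases hn : Even n
    · simp only [if_pos hn, if_neg (show ¬ Even (n+1) by simpa [Int.even_add_one] using hn)]
      intro h
      simp [eq_comm]
    · simp only [if_neg hn, if_pos (Int.even_add_one.2 hn)]
      intro h
      simp [eq_comm]
  · simp only [if_neg (by decide : ¬ Even (-1 : ℤ))]
    intro y; simp [eq_comm]

/-- A weak injective Gorenstein weak injective module is injective. -/
lemma aux_injective_of_wi_gwi (M : ModuleCat.{u} R) (hW : WeakInjective R M)
    (hG : GorensteinWeakInjective R M) : Module.Injective R M := by
  obtain ⟨I, d, π, ⟨hinj, hex, hhom⟩, hπs, hπe⟩ := hG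
  have hex0 : Function.Exact (d (-1)) (d 0) := by
    exact hex (-1)
  have hex1 : Function.Exact (d 0) (d 1) := by
    exact hex 0
  have hhom0 : Function.Exact (fun g : ↑M →ₗ[R] ↑(I 0) => (d 0).comp g)
      (fun g : ↑M →ₗ[R] ↑(I 1) => (d 1).comp g) := hhom M hW 0
  have hex0' : LinearMap.ker (d 0) = LinearMap.range (d (-1)) := LinearMap.exact_iff.mp hex0
  have hex1' : LinearMap.ker (d 1) = LinearMap.range (d 0) := LinearMap.exact_iff.mp hex1
  have hπe' : LinearMap.ker π = LinearMap.range (d (-1)) := LinearMap.exact_iff.mp hπe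
  have hkk : LinearMap.ker π = LinearMap.ker (d 0) := hπe'.trans hex0'.symm
  let e := π.quotKerEquivOfSurjective hπs
  let j : ↑M →ₗ[R] ↑(I 1) :=
    (Submodule.liftQ (LinearMap.ker π) (d 0) (le_of_eq hkk)).comp e.symm.toLinearMap
  have hemk : ∀ x : ↑(I 0), e (Submodule.Quotient.mk x) = π x := fun _ => rfl
  have hjπ : ∀ x, j (π x) = d 0 x := by
    intro x
    have h1 : e.symm (π x) = Submodule.Quotient.mk x := by
      rw [LinearEquiv.symm_apply_eq, hemk]
    show ((LinearMap.ker π).liftQ (d 0) (le_of_eq hkk) ∘ₗ ↑e.symm) (π x) = (d 0) x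
    rw [LinearMap.comp_apply, LinearEquiv.coe_coe, h1, Submodule.liftQ_apply]
  have hdj : (d 1).comp j = 0 := by
    apply LinearMap.ext; intro m
    obtain ⟨x, rfl⟩ := hπs m
    simp only [LinearMap.comp_apply, hjπ, LinearMap.zero_apply]
    have hmem : d 0 x ∈ LinearMap.ker (d 1) := by
      rw [hex1']; exact ⟨x, rfl⟩
    exact hmem
  obtain ⟨s, hs⟩ := (hhom0 j).mp hdj
  have hjinj : Function.Injective j := by
    intro a b hab
    obtain ⟨x, rfl⟩ := hπs a
    obtain ⟨y, rfl⟩ := hπs b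
    have hd : (d 0) (x - y) = 0 := by
      rw [map_sub, ← hjπ, ← hjπ, hab, sub_self]
    have hmem : x - y ∈ LinearMap.ker π := by
      rw [hkk]; exact hd
    have : π (x - y) = 0 := hmem
    rw [map_sub, sub_eq_zero] at this
    exact this
  have key : ∀ m, π (s m) = m := by
    intro m
    apply hjinj
    rw [hjπ (s m)]
    have := LinearMap.congr_fun hs m
    simpa using this
  exact aux_injective_of_retract (hinj 0) s π key

/-- An `R`-module is injective iff it is both weak injective and Gorenstein weak
injective. -/
theorem injective_iff_weakInjective_and_gorensteinWeakInjective (M : ModuleCat.{u} R) :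
    Module.Injective R M ↔ WeakInjective R M ∧ GorensteinWeakInjective R M := by
  constructor
  · intro h
    exact ⟨fun N _ => aux_extVanish_of_injective R N M h, aux_gwi_of_injective R M h⟩
  · rintro ⟨hW, hG⟩
    exact aux_injective_of_wi_gwi R M hW hG
end

section
/- If the class of Gorenstein weak injective R-modules is closed under arbitrary direct sums, then R is left Noetherian. -/
open CategoryTheory

universe u

variable (R : Type u) [Ring R]

section Aux

open Limits

variable {R}

/-- `Ext^{n+1}(N, W) = 0` when `W` is an injective object. -/
lemma aux_isZero_ext_succ_of_injective (N W : ModuleCat.{u} R)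
    [CategoryTheory.Injective W] (n : ℕ) :
    IsZero (((_root_.Ext ℤ (ModuleCat.{u} R) (n + 1)).obj (Opposite.op N)).obj W) := by
  obtain ⟨P⟩ := (HasProjectiveResolution.out (Z := N))
  refine IsZero.of_iso ?_ (P.isoExt (n + 1) W)
  rw [← HomologicalComplex.exactAt_iff_isZero_homology]
  rw [HomologicalComplex.exactAt_iff' _ n (n + 1) (n + 2) (by simp) (by simp)]
  rw [ShortComplex.moduleCat_exact_iff]
  intro x hx
  dsimp [ChainComplex.linearYonedaObj] at x hx ⊢
  exact ⟨(P.exact_succ n).descToInjective x hx,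
    (P.exact_succ n).comp_descToInjective x hx⟩

lemma aux_extVanish_of_injective_s3 (N W : ModuleCat.{u} R)
    [CategoryTheory.Injective W] (n : ℕ) : ExtVanish R (n + 1) N W := by
  have hz := aux_isZero_ext_succ_of_injective N W n
  constructor
  intro a b
  have h : (𝟙 (((_root_.Ext ℤ (ModuleCat.{u} R) (n + 1)).obj (Opposite.op N)).obj W)) =
      (0 : _ ⟶ _) := hz.eq_of_src _ _
  have ha := LinearMap.congr_fun (congrArg ModuleCat.Hom.hom h) a
  have hb := LinearMap.congr_fun (congrArg ModuleCat.Hom.hom h) b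
  simp only [ModuleCat.hom_id, ModuleCat.hom_zero, LinearMap.id_apply, LinearMap.zero_apply] at ha hb
  have ha' : a = 0 := ha.trans rfl
  have hb' : b = 0 := hb.trans rfl
  rw [ha', hb']

lemma aux_weakInjective_of_injective (W : ModuleCat.{u} R)
    [CategoryTheory.Injective W] : WeakInjective R W :=
  fun N _ => aux_extVanish_of_injective_s3 N W 0

/-- Every injective module is Gorenstein injective relative to any test class. -/
lemma aux_gorensteinRelInjective_of_injective (𝒯 : ModuleCat.{u} R → Prop)
    (E : ModuleCat.{u} R) [CategoryTheory.Injective E] :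
    GorensteinRelInjective R 𝒯 E := by
  have hE : Module.Injective R E :=
    Module.injective_module_of_injective_object R E
      (inj := by exact inferInstanceAs (CategoryTheory.Injective E))
  refine ⟨fun _ => E, fun n => if Even n then LinearMap.id else 0, LinearMap.id,
    ⟨fun n => hE, ?_, ?_⟩, Function.surjective_id, ?_⟩
  · intro n
    dsimp only
    rcases Int.even_or_odd n with he | ho
    · rw [if_pos he, if_neg (by simpa [Int.even_add_one] using he)]
      intro y
      constructor
      · intro _; exact ⟨y, rfl⟩
      · intro _; rfl
    · have hne : ¬ Even n := Int.not_even_iff_odd.mpr ho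
      rw [if_neg hne, if_pos (Int.even_add_one.mpr hne)]
      intro y
      constructor
      · intro hy
        exact ⟨0, by simpa using hy.symm⟩
      · rintro ⟨x, hx⟩
        simpa using hx.symm
  · intro W _ n
    dsimp only
    rcases Int.even_or_odd n with he | ho
    · rw [if_pos he, if_neg (by simpa [Int.even_add_one] using he)]
      intro g
      constructor
      · intro _
        exact ⟨g, by ext w; simp⟩
      · intro _
        ext w; simp
    · have hne : ¬ Even n := Int.not_even_iff_odd.mpr ho
      rw [if_neg hne, if_pos (Int.even_add_one.mpr hne)]
      intro g
      constructor
      · intro hg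
        refine ⟨0, ?_⟩
        ext w
        have := LinearMap.congr_fun hg w
        simpa using this.symm
      · rintro ⟨x, hx⟩
        ext w
        have := LinearMap.congr_fun hx w
        simpa using this.symm
  · dsimp only
    have hne : ¬ Even (-1 : ℤ) := by decide
    rw [if_neg hne]
    intro y
    constructor
    · intro hy
      exact ⟨0, by simpa using hy.symm⟩
    · rintro ⟨x, hx⟩
      simpa using hx.symm

/-- If a direct sum of injective modules is Gorenstein weak injective, then it is
injective. -/
lemma aux_injective_of_gwi_directSum (ι : Type u) (M : ι → ModuleCat.{u} R)
    (hM : ∀ i, CategoryTheory.Injective (M i))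
    (hS : GorensteinWeakInjective R (ModuleCat.of R (DirectSum ι (fun i => ↥(M i))))) :
    Module.Injective R (DirectSum ι (fun i => ↥(M i))) := by
  classical
  obtain ⟨T, dT, π, ⟨hinj, hex, hhom⟩, hπs, hπe⟩ := hS
  -- kernel inclusion : ker π ⊆ ker (dT 0)
  have hker : ∀ x y : T 0, π x = π y → dT 0 x = dT 0 y := by
    intro x y hxy
    have h1 : π (x - y) = 0 := by rw [map_sub, hxy, sub_self]
    obtain ⟨z, hz⟩ := (hπe (x - y)).mp h1
    have h2 : dT 0 (x - y) = 0 := by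
      rw [← hz]; exact (hex (-1)).apply_apply_eq_zero z
    rw [map_sub] at h2
    exact sub_eq_zero.mp h2
  set S : Type u := DirectSum ι (fun i => ↥(M i)) with hSdef
  let σ : S → T 0 := Function.surjInv hπs
  have hσ : ∀ s, π (σ s) = s := Function.surjInv_eq hπs
  let θ : S →ₗ[R] T 1 :=
    { toFun := fun s => dT 0 (σ s)
      map_add' := fun a b => by
        show dT 0 (σ (a + b)) = dT 0 (σ a) + dT 0 (σ b)
        rw [hker (σ (a + b)) (σ a + σ b) (by rw [map_add, hσ, hσ, hσ]), map_add]
      map_smul' := fun r a => by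
        show dT 0 (σ (r • a)) = r • dT 0 (σ a)
        rw [hker (σ (r • a)) (r • σ a) (by rw [map_smul, hσ, hσ]), map_smul] }
  have hθπ : ∀ x : T 0, θ (π x) = dT 0 x := fun x => hker _ x (hσ _)
  have hθinj : Function.Injective θ := by
    intro a b hab
    have hab0 : θ (a - b) = 0 := by rw [map_sub, hab, sub_self]
    obtain ⟨x, hx⟩ := hπs (a - b)
    have hx0 : dT 0 x = 0 := by rw [← hθπ x, hx]; exact hab0
    obtain ⟨z, hz⟩ := ((hex (-1)) (show ↥(T ((-1 : ℤ) + 1)) from x)).mp hx0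
    have : π x = 0 := (hπe x).mpr ⟨z, hz⟩
    rw [hx] at this
    exact sub_eq_zero.mp this
  have hdθ : ∀ s : S, dT 1 (θ s) = 0 := fun s => (hex 0).apply_apply_eq_zero (σ s)
  -- lift θ componentwise
  have hcomp : ∀ i : ι, ∃ g : (M i) →ₗ[R] T 0,
      (dT 0).comp g = θ.comp (DirectSum.lof R ι (fun i => ↥(M i)) i) := by
    intro i
    have hW : WeakInjective R (M i) :=
      have := hM i; aux_weakInjective_of_injective (M i)
    have := (hhom (M i) hW 0) (θ.comp (DirectSum.lof R ι (fun i => ↥(M i)) i))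
    refine (this.mp ?_)
    ext w
    exact hdθ _
  choose g hg using hcomp
  let hmap : S →ₗ[R] T 0 := DirectSum.toModule R ι _ g
  have hθh : ∀ s : S, dT 0 (hmap s) = θ s := by
    have : (dT 0).comp hmap = θ := by
      refine DirectSum.linearMap_ext R fun i => ?_
      ext w
      have := LinearMap.congr_fun (hg i) w
      simpa [hmap, DirectSum.toModule_lof] using this
    intro s
    exact LinearMap.congr_fun this s
  have hsec : ∀ s : S, π (hmap s) = s := by
    intro s
    apply hθinj
    rw [hθπ, hθh]
  constructor
  intro X Y _ _ _ _ f hf gg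
  obtain ⟨k, hk⟩ := (hinj 0).out f hf (hmap.comp gg)
  refine ⟨π.comp k, fun x => ?_⟩
  have h1 : k (f x) = hmap (gg x) := hk x
  calc (π.comp k) (f x) = π (k (f x)) := rfl
    _ = π (hmap (gg x)) := by rw [h1]
    _ = gg x := hsec _

end Aux

/-- If the class of Gorenstein weak injective modules is closed under arbitrary direct
sums, then `R` is left Noetherian. -/
theorem isNoetherianRing_of_gorensteinWeakInjective_directSum
    (h : ∀ (ι : Type u) (M : ι → ModuleCat.{u} R),
      (∀ i, GorensteinWeakInjective R (M i)) →
      GorensteinWeakInjective R (ModuleCat.of R (DirectSum ι (fun i => ↥(M i))))) :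
    IsNoetherianRing R := by
  rw [isNoetherianRing_iff]
  rw [← monotone_stabilizes_iff_noetherian]
  intro f
  -- injective modules containing the quotients `R ⧸ f n`
  let Q : ℕ → ModuleCat.{u} R := fun n => ModuleCat.of R (R ⧸ f n)
  let E : ℕ → ModuleCat.{u} R := fun n => CategoryTheory.Injective.under (Q n)
  have hEinj : ∀ n, CategoryTheory.Injective (E n) := fun n => inferInstance
  have hιinj : ∀ n, Function.Injective (CategoryTheory.Injective.ι (Q n)) := fun n =>
    (ModuleCat.mono_iff_injective _).mp inferInstance
  -- the direct sum is injective
  set DS : Type u := DirectSum (ULift.{u} ℕ) (fun i => ↥(E i.down)) with hDSdef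
  have hDSinj : Module.Injective R DS := by
    refine aux_injective_of_gwi_directSum (ULift.{u} ℕ) (fun i => E i.down)
      (fun i => hEinj i.down) ?_
    exact h _ _ (fun i =>
      have := hEinj i.down
      aux_gorensteinRelInjective_of_injective (WeakInjective R) (E i.down))
  -- Bass–Papp argument
  let q : ∀ n : ℕ, R →ₗ[R] (E n) := fun n =>
    (CategoryTheory.Injective.ι (Q n)).hom.comp (f n).mkQ
  have hq0 : ∀ (n : ℕ) (a : R), a ∈ f n → q n a = 0 := by
    intro n a ha
    have h1 : (f n).mkQ a = 0 := (Submodule.Quotient.mk_eq_zero _).mpr ha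
    show (CategoryTheory.Injective.ι (Q n)).hom ((f n).mkQ a) = 0
    rw [h1, map_zero]
  have hqmem : ∀ (n : ℕ) (a : R), q n a = 0 → a ∈ f n := by
    intro n a ha
    have : (f n).mkQ a = 0 := by
      apply hιinj n
      rw [map_zero]; exact ha
    exact (Submodule.Quotient.mk_eq_zero _).mp this
  let G : ℕ → (R →ₗ[R] DS) := fun m =>
    ∑ n ∈ Finset.range m, (DirectSum.lof R (ULift.{u} ℕ) (fun i => ↥(E i.down))
      (ULift.up n)).comp (q n)
  have hGapp : ∀ (m : ℕ) (a : R), G m a = ∑ n ∈ Finset.range m,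
      (DirectSum.lof R (ULift.{u} ℕ) (fun i => ↥(E i.down)) (ULift.up n)) (q n a) := by
    intro m a
    show (∑ n ∈ Finset.range m, (DirectSum.lof R (ULift.{u} ℕ) (fun i => ↥(E i.down))
      (ULift.up n)).comp (q n)) a = _
    rw [LinearMap.sum_apply]
    rfl
  have hGle : ∀ (a : R) (m m' : ℕ), m ≤ m' → a ∈ f m → G m a = G m' a := by
    intro a m m' hmm' ha
    rw [hGapp, hGapp]
    refine Finset.sum_subset (Finset.range_subset_range.mpr hmm') ?_
    intro n _ hn
    rw [Finset.mem_range, not_lt] at hn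
    have han : a ∈ f n := f.monotone hn ha
    rw [hq0 n a han, map_zero]
  -- component computation
  have hGcomp : ∀ (m : ℕ) (a : R) (k : ℕ), a ∈ f m → (G m a) (ULift.up k) = q k a := by
    intro m a k ha
    rw [hGapp]
    rw [DFinsupp.finset_sum_apply]
    rcases lt_or_ge k m with hk | hk
    · rw [Finset.sum_eq_single k]
      · rw [DirectSum.lof_apply]
      · intro n _ hn
        rw [DirectSum.lof_eq_of, DirectSum.of_eq_of_ne _ _ _ (by simpa using Ne.symm hn)]
      · intro hk'
        exact absurd (Finset.mem_range.mpr hk) (fun hh => hk' hh)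
    · have hq : q k a = 0 := hq0 k a (f.monotone hk ha)
      rw [hq]
      refine Finset.sum_eq_zero ?_
      intro n hn
      rw [Finset.mem_range] at hn
      have : n ≠ k := fun hnk => absurd hk (by omega)
      rw [DirectSum.lof_eq_of, DirectSum.of_eq_of_ne _ _ _ (by simpa using Ne.symm this)]
  -- the union ideal
  set I : Submodule R R := ⨆ n, f n with hIdef
  have hmem : ∀ a : ↥I, ∃ n, (a : R) ∈ f n := fun a =>
    (Submodule.mem_iSup_of_directed _ f.monotone.directed_le).mp a.2
  let idx : ↥I → ℕ := fun a => (hmem a).choose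
  have hidx : ∀ a : ↥I, (a : R) ∈ f (idx a) := fun a => (hmem a).choose_spec
  let F : ↥I →ₗ[R] DS :=
    { toFun := fun a => G (idx a) a
      map_add' := fun a b => by
        show G (idx (a + b)) ((a + b : ↥I) : R) = G (idx a) a + G (idx b) b
        have hco : ((a + b : ↥I) : R) = (a : R) + (b : R) := rfl
        set m0 := max (idx (a + b)) (max (idx a) (idx b)) with hm0
        rw [hGle _ _ m0 (le_max_left _ _) (hidx (a + b)),
          hGle (a : R) _ m0 (le_trans (le_max_left _ _) (le_max_right _ _)) (hidx a),
          hGle (b : R) _ m0 (le_trans (le_max_right _ _) (le_max_right _ _)) (hidx b),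
          hco, map_add]
      map_smul' := fun r a => by
        show G (idx (r • a)) ((r • a : ↥I) : R) = r • G (idx a) (a : R)
        have hco : ((r • a : ↥I) : R) = r • (a : R) := rfl
        set m0 := max (idx (r • a)) (idx a) with hm0
        rw [hGle _ _ m0 (le_max_left _ _) (hidx (r • a)),
          hGle (a : R) _ m0 (le_max_right _ _) (hidx a), hco, map_smul] }
  have hF : ∀ (a : ↥I) (k : ℕ), (F a) (ULift.up k) = q k (a : R) := fun a k =>
    hGcomp (idx a) (a : R) k (hidx a)
  -- extend F to R
  obtain ⟨gext, hgext⟩ := hDSinj.out I.subtype (Submodule.injective_subtype I) F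
  set s : DS := gext 1 with hs
  -- bound the support of s
  have hfin : Set.Finite {n : ℕ | s (ULift.up n) ≠ 0} := by
    have h1 : Set.Finite {i : ULift.{u} ℕ | s i ≠ 0} := DFinsupp.finite_support s
    have h2 : {n : ℕ | s (ULift.up n) ≠ 0} = ULift.up ⁻¹' {i : ULift.{u} ℕ | s i ≠ 0} := rfl
    rw [h2]
    exact Set.Finite.preimage (Function.Injective.injOn (fun x y hxy => by
      simpa using congrArg ULift.down hxy)) h1
  obtain ⟨N, hN⟩ := hfin.bddAbove
  have hsN : s (ULift.up (N + 1)) = 0 := by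
    by_contra hc
    exact absurd (hN hc) (by omega)
  -- I is contained in f (N+1)
  have hIle : I ≤ f (N + 1) := by
    intro a ha
    have h2 : gext a = a • s := by
      have h3 : (a : R) = a • (1 : R) := by rw [smul_eq_mul, mul_one]
      rw [hs, ← map_smul, ← h3]
    have h4 : q (N + 1) a = a • (s (ULift.up (N + 1))) := by
      have h5 := hF ⟨a, ha⟩ (N + 1)
      have h6 : gext (I.subtype ⟨a, ha⟩) = F ⟨a, ha⟩ := hgext ⟨a, ha⟩
      have h7 : gext a = F ⟨a, ha⟩ := h6
      rw [← h5, ← h7, h2, DirectSum.smul_apply]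
    rw [hsN, smul_zero] at h4
    exact hqmem _ _ h4
  refine ⟨N + 1, fun m hm => le_antisymm (f.monotone hm) ?_⟩
  exact le_trans (le_iSup f m) hIle
end

section
/- A ring R is left Noetherian if and only if every weak injective R-module is Gorenstein weak injective. -/
open CategoryTheory

universe u

variable (R : Type u) [Ring R]

/-! ### Auxiliary machinery -/

section AuxMachinery

variable {R : Type u} [Ring R]

/-- The chain complex associated to resolution data. -/
noncomputable def resComplex (F : ℕ → ModuleCat.{u} R) (d : ∀ n, F (n + 1) →ₗ[R] F n)
    (hd : ∀ n, Function.Exact (d (n + 1)) (d n)) : ChainComplex (ModuleCat.{u} R) ℕ :=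
  ChainComplex.of F (fun n => ModuleCat.ofHom (d n)) (fun n => by
    ext x
    exact (hd n).apply_apply_eq_zero x)

lemma resComplex_d (F : ℕ → ModuleCat.{u} R) (d : ∀ n, F (n + 1) →ₗ[R] F n)
    (hd : ∀ n, Function.Exact (d (n + 1)) (d n)) (n : ℕ) :
    (resComplex F d hd).d (n + 1) n = ModuleCat.ofHom (d n) :=
  ChainComplex.of_d (X := F) (d := fun n => ModuleCat.ofHom (d n)) n

lemma resComplex_exactAt (F : ℕ → ModuleCat.{u} R) (d : ∀ n, F (n + 1) →ₗ[R] F n)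
    (hd : ∀ n, Function.Exact (d (n + 1)) (d n)) (n : ℕ) :
    (resComplex F d hd).ExactAt (n + 1) := by
  rw [HomologicalComplex.exactAt_iff' _ (n + 2) (n + 1) n (by simp) (by simp)]
  rw [ShortComplex.moduleCat_exact_iff]
  intro x hx
  replace hx : ((resComplex F d hd).d (n+1) n) x = 0 := hx
  rw [resComplex_d] at hx
  obtain ⟨y, hy⟩ := (hd n x).1 hx
  refine ⟨y, ?_⟩
  show ((resComplex F d hd).d (n+2) (n+1)) y = x
  rw [resComplex_d]
  exact hy

noncomputable def resResolution (N : ModuleCat.{u} R) (F : ℕ → ModuleCat.{u} R)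
    (d : ∀ n, F (n + 1) →ₗ[R] F n) (ε : F 0 →ₗ[R] N)
    (hproj : ∀ n, Module.Projective R (F n))
    (hsurj : Function.Surjective ε) (hex0 : Function.Exact (d 0) ε)
    (hd : ∀ n, Function.Exact (d (n + 1)) (d n)) : ProjectiveResolution N where
  complex := resComplex F d hd
  projective n := by
    have := (IsProjective.iff_projective (R := R) (P := F n)).1 (hproj n)
    exact this
  π := (ChainComplex.toSingle₀Equiv _ _).symm ⟨ModuleCat.ofHom ε, by
    rw [resComplex_d]
    ext x
    exact hex0.apply_apply_eq_zero x⟩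
  quasiIso := ⟨fun n => by
    cases n with
    | zero =>
      rw [ChainComplex.quasiIsoAt₀_iff, ShortComplex.quasiIso_iff_of_zeros']
      · constructor
        · rw [ShortComplex.moduleCat_exact_iff]
          intro (x : F 0) hx
          dsimp at hx
          simp only [HomologicalComplex.shortComplexFunctor'_map_τ₂,
            ChainComplex.toSingle₀Equiv_symm_apply_f_zero] at hx
          obtain ⟨y, hy⟩ := (hex0 x).1 hx
          refine ⟨y, ?_⟩
          show ((resComplex F d hd).d 1 0) y = x
          rw [resComplex_d]
          exact hy
        · simp only [HomologicalComplex.shortComplexFunctor'_map_τ₂,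
            ChainComplex.toSingle₀Equiv_symm_apply_f_zero]
          exact (ModuleCat.epi_iff_surjective _).2 hsurj
      all_goals rfl
    | succ n =>
      rw [quasiIsoAt_iff_exactAt']
      · exact resComplex_exactAt F d hd n
      · apply ChainComplex.exactAt_succ_single_obj⟩

lemma moduleCat_subsingleton_iff_isZero {S : Type*} [Ring S] (M : ModuleCat S) :
    Subsingleton M ↔ Limits.IsZero M := by
  constructor
  · intro h
    exact ModuleCat.isZero_of_subsingleton M
  · intro h
    have h0 : (𝟙 M : M ⟶ M) = 0 := h.eq_of_src _ _
    refine ⟨fun a b => ?_⟩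
    have ha : a = (𝟙 M : M ⟶ M) a := rfl
    have hb : b = (𝟙 M : M ⟶ M) b := rfl
    rw [ha, hb, h0]
    rfl

lemma subsingleton_ext_one_iff (N M : ModuleCat.{u} R) (F : ℕ → ModuleCat.{u} R)
    (d : ∀ n, F (n + 1) →ₗ[R] F n) (ε : F 0 →ₗ[R] N)
    (hproj : ∀ n, Module.Projective R (F n))
    (hsurj : Function.Surjective ε) (hex0 : Function.Exact (d 0) ε)
    (hd : ∀ n, Function.Exact (d (n + 1)) (d n)) :
    Subsingleton (((_root_.Ext ℤ (ModuleCat.{u} R) 1).obj (Opposite.op N)).obj M) ↔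
      ∀ f : F 1 →ₗ[R] M, f.comp (d 1) = 0 → ∃ g : F 0 →ₗ[R] M, g.comp (d 0) = f := by
  let P := resResolution N F d ε hproj hsurj hex0 hd
  let K := P.complex.linearYonedaObj ℤ M
  have e := P.isoExt (R := ℤ) 1 M
  have h1 : Subsingleton (((_root_.Ext ℤ (ModuleCat.{u} R) 1).obj (Opposite.op N)).obj M) ↔
      K.ExactAt 1 := by
    rw [moduleCat_subsingleton_iff_isZero, HomologicalComplex.exactAt_iff_isZero_homology]
    exact ⟨fun h => h.of_iso e.symm, fun h => h.of_iso e⟩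
  rw [h1, HomologicalComplex.exactAt_iff' K 0 1 2 (by simp) (by simp),
    ShortComplex.moduleCat_exact_iff]
  have hd12 : ∀ f : F 1 →ₗ[R] M, (K.d 1 2) (ModuleCat.ofHom f) = ModuleCat.ofHom (f ∘ₗ (d 1)) := by
    intro f
    have h2 : (K.d 1 2) (ModuleCat.ofHom f) = P.complex.d 2 1 ≫ ModuleCat.ofHom f := by
      simp only [K, ChainComplex.linearYonedaObj_d]
      rfl
    rw [h2]
    rw [show P.complex.d 2 1 = ModuleCat.ofHom (d 1) from resComplex_d F d hd 1]
    rfl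
  have hd01 : ∀ g : F 0 →ₗ[R] M, (K.d 0 1) (ModuleCat.ofHom g) = ModuleCat.ofHom (g ∘ₗ (d 0)) := by
    intro g
    have h2 : (K.d 0 1) (ModuleCat.ofHom g) = P.complex.d 1 0 ≫ ModuleCat.ofHom g := by
      simp only [K, ChainComplex.linearYonedaObj_d]
      rfl
    rw [h2]
    rw [show P.complex.d 1 0 = ModuleCat.ofHom (d 0) from resComplex_d F d hd 0]
    rfl
  constructor
  · intro h f hf
    obtain ⟨g, hg⟩ := h (ModuleCat.ofHom f) (by
      show (K.d 1 2) (ModuleCat.ofHom f) = 0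
      rw [hd12 f]
      exact (congrArg ModuleCat.ofHom hf).trans (ModuleCat.hom_ext rfl))
    exact ⟨g.hom, by
      have : (K.d 0 1) (ModuleCat.ofHom g.hom) = ModuleCat.ofHom f := hg
      rw [hd01 g.hom] at this
      exact congrArg ModuleCat.Hom.hom this⟩
  · intro h x2 hx2
    have hf' : (x2.hom ∘ₗ (d 1) : F 2 →ₗ[R] M) = 0 := by
      exact congrArg ModuleCat.Hom.hom ((hd12 x2.hom).symm.trans hx2)
    obtain ⟨g, hg⟩ := h x2.hom hf'
    exact ⟨ModuleCat.ofHom g, by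
      show (K.d 0 1) (ModuleCat.ofHom g) = x2
      rw [hd01 g]
      exact congrArg ModuleCat.ofHom hg⟩

/-! ### Free resolutions over a Noetherian ring -/

noncomputable def coverOf (R : Type u) [Ring R] (M : Type u) [AddCommGroup M] [Module R M]
    [Module.Finite R M] :
    Σ' (k : ℕ) (c : (Fin k → R) →ₗ[R] M), Function.Surjective c :=
  Classical.choice <| by
    obtain ⟨n, f, hf⟩ := Module.Finite.exists_fin' R M
    exact ⟨⟨n, f, hf⟩⟩

lemma finite_ker [IsNoetherianRing R] {A : Type u} [AddCommGroup A] [Module R A]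
    [Module.Finite R A] {B : Type u} [AddCommGroup B] [Module R B] (f : A →ₗ[R] B) :
    Module.Finite R ↥(LinearMap.ker f) := by
  have : IsNoetherian R A := isNoetherian_of_isNoetherianRing_of_finite R A
  exact Module.Finite.iff_fg.2 (IsNoetherian.noetherian _)

section Builder

variable [IsNoetherianRing R]
variable (N F₀ : ModuleCat.{u} R) [Module.Finite R F₀] (ε : F₀ →ₗ[R] N)

/-- Tower of kernels and free covers. -/
noncomputable def resTower :
    ℕ → Σ' (F : ModuleCat.{u} R) (K : Submodule R F), Module.Finite R ↥K
  | 0 => ⟨F₀, LinearMap.ker ε, finite_ker ε⟩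
  | n + 1 =>
    let prev := resTower n
    let K := prev.2.1
    haveI : Module.Finite R ↥K := prev.2.2
    let c := coverOf R ↥K
    ⟨ModuleCat.of R (Fin c.1 → R), LinearMap.ker c.2.1, finite_ker c.2.1⟩

/-- The cover map from level `n+1` onto the kernel at level `n`. -/
noncomputable def resCover (n : ℕ) :
    ((resTower N F₀ ε (n + 1)).1 : Type u) →ₗ[R] ↥((resTower N F₀ ε n).2.1) :=
  haveI : Module.Finite R ↥((resTower N F₀ ε n).2.1) := (resTower N F₀ ε n).2.2
  (coverOf R ↥((resTower N F₀ ε n).2.1)).2.1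

lemma resCover_surjective (n : ℕ) : Function.Surjective (resCover N F₀ ε n) :=
  haveI : Module.Finite R ↥((resTower N F₀ ε n).2.1) := (resTower N F₀ ε n).2.2
  (coverOf R ↥((resTower N F₀ ε n).2.1)).2.2

lemma resTower_succ_K (n : ℕ) :
    (resTower N F₀ ε (n + 1)).2.1 = LinearMap.ker (resCover N F₀ ε n) := rfl

/-- The differentials. -/
noncomputable def resD (n : ℕ) :
    ((resTower N F₀ ε (n + 1)).1 : Type u) →ₗ[R] ((resTower N F₀ ε n).1 : Type u) :=
  ((resTower N F₀ ε n).2.1).subtype.comp (resCover N F₀ ε n)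

lemma resD_ker (n : ℕ) :
    LinearMap.ker (resD N F₀ ε n) = (resTower N F₀ ε (n + 1)).2.1 := by
  rw [resTower_succ_K, resD, LinearMap.ker_comp, Submodule.ker_subtype, Submodule.comap_bot]

lemma resD_range (n : ℕ) :
    LinearMap.range (resD N F₀ ε n) = (resTower N F₀ ε n).2.1 := by
  rw [resD, LinearMap.range_comp, LinearMap.range_eq_top.2 (resCover_surjective N F₀ ε n),
    Submodule.map_subtype_top]

lemma resD_exact (n : ℕ) :
    Function.Exact (resD N F₀ ε (n + 1)) (resD N F₀ ε n) := by
  rw [LinearMap.exact_iff, resD_ker, resD_range]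

lemma resD_exact_zero : Function.Exact (resD N F₀ ε 0) ε :=
  LinearMap.exact_iff.mpr (resD_range N F₀ ε 0).symm

variable [Module.Projective R F₀]

lemma resTower_finite (n : ℕ) : Module.Finite R ((resTower N F₀ ε n).1 : Type u) := by
  cases n with
  | zero => exact ‹Module.Finite R F₀›
  | succ n =>
    haveI := (resTower N F₀ ε n).2.2
    exact inferInstanceAs (Module.Finite R (Fin _ → R))

lemma resTower_projective (n : ℕ) :
    Module.Projective R ((resTower N F₀ ε n).1 : Type u) := by
  cases n with
  | zero => exact ‹Module.Projective R F₀›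
  | succ n =>
    haveI := (resTower N F₀ ε n).2.2
    exact inferInstanceAs (Module.Projective R (Fin _ → R))

lemma sfp_of_cover (hε : Function.Surjective ε) : SuperFinitelyPresented R N :=
  ⟨fun n => (resTower N F₀ ε n).1, resD N F₀ ε, ε, resTower_finite N F₀ ε,
    resTower_projective N F₀ ε, hε, resD_exact_zero N F₀ ε, resD_exact N F₀ ε⟩

lemma extension_of_extVanish (M : ModuleCat.{u} R) (hε : Function.Surjective ε)
    (hvan : ExtVanish R 1 N M) (f : ↥(LinearMap.ker ε) →ₗ[R] M) :
    ∃ g : F₀ →ₗ[R] M, ∀ x : ↥(LinearMap.ker ε), g x.1 = f x := by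
  have key := (subsingleton_ext_one_iff N M (fun n => (resTower N F₀ ε n).1)
    (resD N F₀ ε) ε (resTower_projective N F₀ ε) hε (resD_exact_zero N F₀ ε)
    (resD_exact N F₀ ε)).1 hvan
  let c0 := resCover N F₀ ε 0
  have hf1 : ((f.comp c0).comp (resD N F₀ ε 1)) = 0 := by
    ext x
    show f (c0 ((resD N F₀ ε 1) x)) = 0
    have hz : c0 ((resD N F₀ ε 1) x) = 0 := (resCover N F₀ ε 1 x).2
    rw [hz]; exact map_zero f
  obtain ⟨g, hg⟩ := key (f.comp c0) hf1
  refine ⟨g, fun x => ?_⟩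
  obtain ⟨y, hy⟩ := resCover_surjective N F₀ ε 0 x
  have h1 : (resD N F₀ ε 0) y = x.1 := by
    show ((resTower N F₀ ε 0).2.1).subtype (c0 y) = x.1
    rw [hy]
    rfl
  calc g x.1 = g ((resD N F₀ ε 0) y) := by rw [h1]
    _ = (g.comp (resD N F₀ ε 0)) y := rfl
    _ = (f.comp c0) y := by rw [hg]
    _ = f x := by show f (c0 y) = f x; rw [hy]

end Builder

lemma injective_of_weakInjective' [IsNoetherianRing R] (W : ModuleCat.{u} R)
    (hW : WeakInjective R W) : Module.Injective R W := by
  apply Module.Baer.injective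
  intro I f
  let N := ModuleCat.of R (R ⧸ I)
  let F₀ := ModuleCat.of R R
  haveI : Module.Finite R F₀ := inferInstanceAs (Module.Finite R R)
  haveI : Module.Projective R F₀ := inferInstanceAs (Module.Projective R R)
  let ε : F₀ →ₗ[R] N := I.mkQ
  have hε : Function.Surjective ε := Submodule.mkQ_surjective I
  have hsfp : SuperFinitelyPresented R N := sfp_of_cover N F₀ ε hε
  have hvan := hW N hsfp
  have hker : LinearMap.ker ε = I := Submodule.ker_mkQ I
  let f' : ↥(LinearMap.ker ε) →ₗ[R] W := f.comp (Submodule.inclusion hker.le)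
  obtain ⟨g, hg⟩ := extension_of_extVanish N F₀ ε W hε hvan f'
  refine ⟨g, fun x hx => ?_⟩
  have hx' : x ∈ LinearMap.ker ε := hker.symm ▸ hx
  exact hg ⟨x, hx'⟩

/-! ### Contractible complexes: injective modules are Gorenstein weak injective -/

lemma injective_prod {A B : Type u} [AddCommGroup A] [Module R A] [AddCommGroup B] [Module R B]
    (hA : Module.Injective R A) (hB : Module.Injective R B) :
    Module.Injective R (A × B) where
  out X Y _ _ _ _ i hi g := by
    obtain ⟨gA, hgA⟩ := hA.out i hi ((LinearMap.fst R A B).comp g)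
    obtain ⟨gB, hgB⟩ := hB.out i hi ((LinearMap.snd R A B).comp g)
    exact ⟨gA.prod gB, fun x => Prod.ext (hgA x) (hgB x)⟩

lemma gwi_of_injective (W : ModuleCat.{u} R) (hW : Module.Injective R W) :
    GorensteinWeakInjective R W := by
  let D : (↥W × ↥W) →ₗ[R] ↥W × ↥W := (LinearMap.inl R ↥W ↥W).comp (LinearMap.snd R ↥W ↥W)
  have hD : ∀ x : ↥W × ↥W, D x = (x.2, 0) := fun x => rfl
  refine ⟨fun _ => ModuleCat.of R (↥W × ↥W), fun _ => D, LinearMap.snd R ↥W ↥W,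
    ⟨fun n => injective_prod hW hW, ?_, ?_⟩, ?_, ?_⟩
  · intro n y
    constructor
    · intro hy
      exact ⟨(0, y.1), Prod.ext rfl (congrArg Prod.fst hy).symm⟩
    · rintro ⟨x, rfl⟩
      rfl
  · intro V hV n g
    constructor
    · intro hg
      refine ⟨LinearMap.prod 0 ((LinearMap.fst R ↥W ↥W).comp g), ?_⟩
      refine LinearMap.ext fun v => ?_
      have h2 : (g v).2 = 0 := congrArg Prod.fst (LinearMap.congr_fun hg v)
      exact Prod.ext rfl h2.symm
    · rintro ⟨h, rfl⟩
      refine LinearMap.ext fun v => ?_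
      exact Prod.ext rfl rfl
  · exact fun w => ⟨(0, w), rfl⟩
  · intro y
    constructor
    · intro hy
      exact ⟨(0, y.1), Prod.ext rfl hy.symm⟩
    · rintro ⟨x, rfl⟩
      rfl

end AuxMachinery


section AuxBackward

variable {R : Type u} [Ring R]

lemma factor_through_surjective {A B C : Type u} [AddCommGroup A] [Module R A]
    [AddCommGroup B] [Module R B] [AddCommGroup C] [Module R C]
    (p : A →ₗ[R] B) (hp : Function.Surjective p) (f : A →ₗ[R] C)
    (h : LinearMap.ker p ≤ LinearMap.ker f) : ∃ g : B →ₗ[R] C, g.comp p = f := by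
  let e := LinearMap.quotKerEquivOfSurjective p hp
  refine ⟨((LinearMap.ker p).liftQ f h).comp e.symm.toLinearMap, LinearMap.ext fun x => ?_⟩
  have he : e.symm (p x) = Submodule.Quotient.mk x := by
    apply e.injective
    rw [LinearEquiv.apply_symm_apply]
    rfl
  show ((LinearMap.ker p).liftQ f h) (e.symm (p x)) = f x
  rw [he]
  rfl

lemma lift_of_injective_target {A B Q : Type u} [AddCommGroup A] [Module R A]
    [AddCommGroup B] [Module R B] [AddCommGroup Q] [Module R Q]
    (hQ : Module.Injective R Q) (dAB : A →ₗ[R] B) (f : A →ₗ[R] Q)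
    (hker : LinearMap.ker dAB ≤ LinearMap.ker f) :
    ∃ g : B →ₗ[R] Q, g.comp dAB = f := by
  obtain ⟨fbar, hfbar⟩ := factor_through_surjective dAB.rangeRestrict
    dAB.surjective_rangeRestrict f (by rw [LinearMap.ker_rangeRestrict]; exact hker)
  obtain ⟨g, hg⟩ := hQ.out (LinearMap.range dAB).subtype Subtype.val_injective fbar
  refine ⟨g, LinearMap.ext fun x => ?_⟩
  show g (dAB x) = f x
  have h1 : g (dAB x) = g ((LinearMap.range dAB).subtype (dAB.rangeRestrict x)) := rfl
  rw [h1, hg]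
  exact LinearMap.congr_fun hfbar x

lemma injective_of_retract {Q M : Type u} [AddCommGroup Q] [Module R Q] [AddCommGroup M]
    [Module R M] (σ : Q →ₗ[R] M) (π : M →ₗ[R] Q) (hretr : ∀ q, π (σ q) = q)
    (hM : Module.Injective R M) : Module.Injective R Q where
  out X Y _ _ _ _ i hi g := by
    obtain ⟨h, hh⟩ := hM.out i hi (σ.comp g)
    refine ⟨π.comp h, fun x => ?_⟩
    show π (h (i x)) = g x
    rw [hh x]
    exact hretr (g x)

lemma injective_of_weakInjective_of_gwi (W : ModuleCat.{u} R) (hwi : WeakInjective R W)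
    (hgwi : GorensteinWeakInjective R W) : Module.Injective R W := by
  obtain ⟨I, dI, π, ⟨hinj, hex, hhom⟩, hπsurj, hπexact⟩ := hgwi
  have hker : LinearMap.ker π = LinearMap.ker (dI 0) := by
    have h1 := LinearMap.exact_iff.mp hπexact
    have h2 : LinearMap.ker (dI 0) = LinearMap.range (dI (-1)) :=
      LinearMap.exact_iff.mp (hex (-1))
    rw [h1, h2]
  obtain ⟨ι, hι⟩ := factor_through_surjective π hπsurj (dI 0) (le_of_eq hker)
  have hι1 : (dI 1).comp ι = 0 := by
    ext w
    obtain ⟨x, rfl⟩ := hπsurj w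
    show (dI 1) (ι (π x)) = 0
    rw [show ι (π x) = dI 0 x from LinearMap.congr_fun hι x]
    exact (hex 0).apply_apply_eq_zero x
  obtain ⟨σ, hσ⟩ := (hhom W hwi 0 ι).mp hι1
  have hιinj : Function.Injective ι := by
    intro a b hab
    obtain ⟨x, rfl⟩ := hπsurj a
    obtain ⟨y, rfl⟩ := hπsurj b
    have hxy : dI 0 x = dI 0 y := by
      have hax : dI 0 x = ι (π x) := (LinearMap.congr_fun hι x).symm
      have hay : dI 0 y = ι (π y) := (LinearMap.congr_fun hι y).symm
      rw [hax, hay, hab]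
    have hsub : x - y ∈ LinearMap.ker (dI 0) := by
      rw [LinearMap.mem_ker, map_sub, hxy, sub_self]
    rw [← hker, LinearMap.mem_ker, map_sub, sub_eq_zero] at hsub
    exact hsub
  have hretr : ∀ w : ↥W, π (σ w) = w := by
    intro w
    apply hιinj
    have h1 : ι (π (σ w)) = dI 0 (σ w) := LinearMap.congr_fun hι (σ w)
    have h2 : dI 0 (σ w) = ι w := LinearMap.congr_fun hσ w
    rw [h1, h2]
  exact injective_of_retract σ π hretr (hinj 0)

section EventuallyZero

variable (E : ℕ → Type u) [∀ n, AddCommGroup (E n)] [∀ n, Module R (E n)]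

def eventuallyZeroSub : Submodule R (∀ n, E n) where
  carrier := {v | ∃ N : ℕ, ∀ m, N ≤ m → v m = 0}
  add_mem' := by
    rintro a b ⟨Na, ha⟩ ⟨Nb, hb⟩
    refine ⟨max Na Nb, fun m hm => ?_⟩
    show a m + b m = 0
    rw [ha m (le_trans (le_max_left _ _) hm), hb m (le_trans (le_max_right _ _) hm), add_zero]
  zero_mem' := ⟨0, fun m _ => rfl⟩
  smul_mem' := by
    rintro c v ⟨N, hN⟩
    refine ⟨N, fun m hm => ?_⟩
    show c • v m = 0
    rw [hN m hm, smul_zero]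

def boundedZeroSub (N : ℕ) : Submodule R (∀ n, E n) where
  carrier := {v | ∀ m, N ≤ m → v m = 0}
  add_mem' := by
    intro a b ha hb m hm
    show a m + b m = 0
    rw [ha m hm, hb m hm, add_zero]
  zero_mem' := fun m _ => rfl
  smul_mem' := by
    intro cc v hv m hm
    show cc • v m = 0
    rw [hv m hm, smul_zero]

lemma boundedZero_le (N : ℕ) : boundedZeroSub (R := R) E N ≤ eventuallyZeroSub (R := R) E :=
  fun v hv => ⟨N, hv⟩

lemma injective_boundedZero (hE : ∀ n, Module.Injective R (E n)) (N : ℕ) :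
    Module.Injective R ↥(boundedZeroSub (R := R) E N) where
  out X Y _ _ _ _ i hi g := by
    have hcomp : ∀ n : ℕ, ∃ h : Y →ₗ[R] E n, ∀ x, h (i x) = (g x).1 n := fun n =>
      (hE n).out i hi ((LinearMap.proj n).comp ((boundedZeroSub (R := R) E N).subtype.comp g))
    choose h hh using hcomp
    let H : Y →ₗ[R] ∀ n, E n := LinearMap.pi (fun n => if N ≤ n then 0 else h n)
    refine ⟨LinearMap.codRestrict (boundedZeroSub (R := R) E N) H (fun y m hm => ?_), fun x => ?_⟩
    · show (if N ≤ m then (0 : Y →ₗ[R] E m) else h m) y = 0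
      rw [if_pos hm]
      rfl
    · apply Subtype.ext
      funext n
      show (if N ≤ n then (0 : Y →ₗ[R] E n) else h n) (i x) = (g x).1 n
      by_cases hn : N ≤ n
      · rw [if_pos hn]
        exact ((g x).2 n hn).symm
      · rw [if_neg hn]
        exact hh n x

lemma weakInjective_eventuallyZero (hE : ∀ n, Module.Injective R (E n)) :
    WeakInjective R (ModuleCat.of R ↥(eventuallyZeroSub (R := R) E)) := by
  intro N hN
  obtain ⟨F, d, ε, hfin, hproj, hsurj, hex0, hd⟩ := hN
  refine (subsingleton_ext_one_iff N (ModuleCat.of R ↥(eventuallyZeroSub (R := R) E)) F d ε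
    hproj hsurj hex0 hd).2 ?_
  intro f hf
  haveI := hfin 1
  obtain ⟨k, s, hs⟩ := Module.Finite.exists_fin (R := R) (M := F 1)
  choose B hB using fun i : Fin k => (f (s i)).2
  set N₀ : ℕ := Finset.univ.sup B with hN₀
  have hr : Submodule.span R (Set.range s) ≤
      Submodule.comap ((eventuallyZeroSub (R := R) E).subtype.comp f)
        (boundedZeroSub (R := R) E N₀) := by
    rw [Submodule.span_le]
    rintro _ ⟨i, rfl⟩
    intro m hm
    exact hB i m (le_trans (Finset.le_sup (Finset.mem_univ i)) hm)
  have hrange : ∀ x : F 1, (f x).1 ∈ boundedZeroSub (R := R) E N₀ := by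
    intro x
    have hx : x ∈ Submodule.span R (Set.range s) := by
      rw [hs]
      trivial
    exact hr hx
  let f₂ : F 1 →ₗ[R] ↥(boundedZeroSub (R := R) E N₀) :=
    LinearMap.codRestrict _ ((eventuallyZeroSub (R := R) E).subtype.comp f) hrange
  have hker : LinearMap.ker (d 0) ≤ LinearMap.ker f₂ := by
    intro x hx
    have hx' : x ∈ Set.range (d 1) := (hd 0 x).mp (LinearMap.mem_ker.mp hx)
    obtain ⟨y, rfl⟩ := hx'
    have hfy : f ((d 1) y) = 0 := LinearMap.congr_fun hf y
    apply LinearMap.mem_ker.mpr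
    apply Subtype.ext
    show ((eventuallyZeroSub (R := R) E).subtype) (f (d 1 y)) = 0
    rw [hfy]
    rfl
  obtain ⟨g₂, hg₂⟩ := lift_of_injective_target (injective_boundedZero E hE N₀) (d 0) f₂ hker
  refine ⟨(Submodule.inclusion (boundedZero_le E N₀)).comp g₂, ?_⟩
  refine LinearMap.ext fun x => ?_
  apply Subtype.ext
  show (g₂ ((d 0) x)).1 = (f x).1
  rw [show g₂ ((d 0) x) = f₂ x from LinearMap.congr_fun hg₂ x]
  rfl

end EventuallyZero

lemma noetherian_of_wi_gwi
    (h : ∀ W : ModuleCat.{u} R, WeakInjective R W → GorensteinWeakInjective R W) :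
    IsNoetherianRing R := by
  apply monotone_stabilizes_iff_noetherian.mp
  intro c
  let Qc : ℕ → ModuleCat.{u} R := fun n => ModuleCat.of R (R ⧸ (c n))
  let En : ℕ → ModuleCat.{u} R := fun n => Injective.under (Qc n)
  let e : ∀ n, Qc n ⟶ En n := fun n => Injective.ι (Qc n)
  have he : ∀ n, Function.Injective (e n) := fun n =>
    (ModuleCat.mono_iff_injective (e n)).1 inferInstance
  have hEinj : ∀ n, Module.Injective R ↥(En n) := by
    intro n
    haveI : CategoryTheory.Injective (ModuleCat.of R ↥(En n)) :=
      (inferInstance : CategoryTheory.Injective (En n))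
    exact Module.injective_module_of_injective_object R ↥(En n)
  let S := eventuallyZeroSub (R := R) (fun n => ↥(En n))
  let W := ModuleCat.of R ↥S
  have hwi : WeakInjective R W := weakInjective_eventuallyZero _ hEinj
  have hinjS : Module.Injective R ↥S := injective_of_weakInjective_of_gwi W hwi (h W hwi)
  let Isup : Submodule R R := ⨆ n, c n
  let Φ : R →ₗ[R] ∀ n, ↥(En n) := LinearMap.pi (fun n => (e n).hom.comp (c n).mkQ)
  have hmemS : ∀ x : R, x ∈ Isup → Φ x ∈ S := by
    intro x hx
    obtain ⟨k, hk⟩ := (Submodule.mem_iSup_of_chain c x).mp hx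
    refine ⟨k, fun m hm => ?_⟩
    show (e m) ((c m).mkQ x) = 0
    rw [show (c m).mkQ x = 0 from (Submodule.Quotient.mk_eq_zero _).2 (c.monotone hm hk)]
    exact map_zero _
  let φ : ↥Isup →ₗ[R] ↥S :=
    LinearMap.codRestrict S (Φ.comp Isup.subtype) (fun x => hmemS x.1 x.2)
  obtain ⟨ψ, hψ⟩ := hinjS.out Isup.subtype Subtype.val_injective φ
  obtain ⟨Nb, hNb⟩ := (ψ 1).2
  have hsup : ∀ x ∈ Isup, x ∈ c Nb := by
    intro x hx
    have h1 : ψ x = x • ψ 1 := by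
      rw [← map_smul]
      congr 1
      rw [smul_eq_mul, mul_one]
    have h2 : ψ x = φ ⟨x, hx⟩ := hψ ⟨x, hx⟩
    have h3 : (φ ⟨x, hx⟩ : ∀ n, ↥(En n)) Nb = (e Nb) ((c Nb).mkQ x) := rfl
    have h4 : ((x • ψ 1 : ↥S) : ∀ n, ↥(En n)) Nb = x • ((ψ 1 : ↥S) : ∀ n, ↥(En n)) Nb := rfl
    have h6 : (e Nb) ((c Nb).mkQ x) = 0 := by
      rw [← h3, ← h2, h1, h4, hNb Nb le_rfl, smul_zero]
    have h7 : (c Nb).mkQ x = 0 := by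
      apply he Nb
      rw [h6, map_zero]
    exact (Submodule.Quotient.mk_eq_zero _).1 h7
  refine ⟨Nb, fun m hm => le_antisymm (c.monotone hm) ?_⟩
  intro x hx
  exact hsup x (le_iSup (fun n => c n) m hx)

end AuxBackward

/-- `R` is left Noetherian iff every weak injective module is Gorenstein weak injective. -/
theorem isNoetherianRing_iff_weakInjective_gorensteinWeakInjective :
    IsNoetherianRing R ↔
      ∀ W : ModuleCat.{u} R, WeakInjective R W → GorensteinWeakInjective R W := by
  constructor
  · intro hnoeth W hW
    haveI : IsNoetherianRing R := hnoeth
    exact gwi_of_injective W (injective_of_weakInjective' W hW)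
  · intro h
    exact noetherian_of_wi_gwi h
end

section
/- The class of Gorenstein weak injective R-modules is closed under extensions: if 0 → L → M → N → 0 is exact with L and N Gorenstein weak injective, then M is Gorenstein weak injective. -/
open CategoryTheory

universe u

variable (R : Type u) [Ring R]

section GWIHelpers
set_option linter.unnecessarySimpa false
variable {R : Type u} [Ring R]

theorem descend_surj {A B C : Type u} [AddCommGroup A] [Module R A] [AddCommGroup B] [Module R B]
    [AddCommGroup C] [Module R C] (π : A →ₗ[R] B) (hπ : Function.Surjective π)
    (φ : A →ₗ[R] C) (h : ∀ a, π a = 0 → φ a = 0) : ∃ ψ : B →ₗ[R] C, ∀ a, ψ (π a) = φ a := by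
  have key : ∀ a a' : A, π a = π a' → φ a = φ a' := by
    intro a a' haa
    have := h (a - a') (by rw [map_sub, haa, sub_self])
    rwa [map_sub, sub_eq_zero] at this
  have hval : ∀ b, π (Function.surjInv hπ b) = b := Function.surjInv_eq hπ
  refine ⟨{ toFun := fun b => φ (Function.surjInv hπ b)
            map_add' := fun y z => by
              show φ _ = φ _ + φ _
              rw [key (Function.surjInv hπ (y + z))
                (Function.surjInv hπ y + Function.surjInv hπ z)
                (by rw [hval, map_add, hval, hval]), map_add]
            map_smul' := fun r y => by
              show φ _ = _ • φ _
              rw [key (Function.surjInv hπ (r • y)) (r • Function.surjInv hπ y)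
                (by rw [hval, map_smul, hval]), map_smul]; rfl }, fun a => key _ _ (hval _)⟩

theorem factor_inj {A B C : Type u} [AddCommGroup A] [Module R A] [AddCommGroup B] [Module R B]
    [AddCommGroup C] [Module R C] (ι : B →ₗ[R] C) (hι : Function.Injective ι)
    (φ : A →ₗ[R] C) (h : ∀ a, φ a ∈ LinearMap.range ι) :
    ∃ ψ : A →ₗ[R] B, ∀ a, ι (ψ a) = φ a := by
  refine ⟨((LinearEquiv.ofInjective ι hι).symm.toLinearMap).comp
    (LinearMap.codRestrict (LinearMap.range ι) φ h), fun a => ?_⟩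
  have key : ∀ y : LinearMap.range ι, ι ((LinearEquiv.ofInjective ι hι).symm y) = (y : C) := by
    intro y
    conv_rhs => rw [← (LinearEquiv.ofInjective ι hι).apply_symm_apply y]
    rfl
  simpa using key ⟨φ a, h a⟩

theorem inj_extend {Q A B : Type u} [AddCommGroup Q] [Module R Q] [AddCommGroup A] [Module R A]
    [AddCommGroup B] [Module R B] (hQ : Module.Injective R Q) (ι : A →ₗ[R] B)
    (hι : Function.Injective ι) (φ : A →ₗ[R] Q) : ∃ ψ : B →ₗ[R] Q, ∀ a, ψ (ι a) = φ a :=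
  hQ.out ι hι φ

theorem factor_through_map {A B C : Type u} [AddCommGroup A] [Module R A] [AddCommGroup B]
    [Module R B] [AddCommGroup C] [Module R C] (hC : Module.Injective R C)
    (p : A →ₗ[R] B) (φ : A →ₗ[R] C) (h : ∀ a, p a = 0 → φ a = 0) :
    ∃ ψ : B →ₗ[R] C, ∀ a, ψ (p a) = φ a := by
  obtain ⟨φ', hφ'⟩ := descend_surj p.rangeRestrict p.surjective_rangeRestrict φ
    (fun a ha => h a (by simpa [Subtype.ext_iff] using ha))
  obtain ⟨ψ, hψ⟩ := inj_extend hC (LinearMap.range p).subtype (Submodule.injective_subtype _) φ'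
  exact ⟨ψ, fun a => (hψ (p.rangeRestrict a)).trans (hφ' a)⟩

theorem prod_injective {Q1 Q2 : Type u} [AddCommGroup Q1] [Module R Q1] [AddCommGroup Q2]
    [Module R Q2] (h1 : Module.Injective R Q1) (h2 : Module.Injective R Q2) :
    Module.Injective R (Q1 × Q2) := by
  constructor
  intro X Y _ _ _ _ f hf g
  obtain ⟨g1, hg1⟩ := h1.out f hf ((LinearMap.fst R Q1 Q2).comp g)
  obtain ⟨g2, hg2⟩ := h2.out f hf ((LinearMap.snd R Q1 Q2).comp g)
  exact ⟨g1.prod g2, fun x => by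
    ext
    · simpa using hg1 x
    · simpa using hg2 x⟩

section Complex

variable (IL : ℤ → ModuleCat.{u} R) (dL : ∀ n : ℤ, IL n →ₗ[R] IL (n + 1))

/-- The key splitting lemma: a short exact sequence `0 → Y → T → W → 0` splits whenever
`Y` is a cosyzygy of the complex `IL` and `Hom(W, IL)` is exact. -/
theorem split_lemma
    (hexL : ∀ n, Function.Exact (dL n) (dL (n + 1)))
    (hinjL : ∀ n, Module.Injective R (IL n))
    {W : Type u} [AddCommGroup W] [Module R W]
    (hW : ∀ j, Function.Exact (fun g : W →ₗ[R] IL j => (dL j).comp g)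
      (fun g : W →ₗ[R] IL (j + 1) => (dL (j + 1)).comp g))
    (n : ℤ) {Y : Type u} [AddCommGroup Y] [Module R Y]
    (πY : IL n →ₗ[R] Y) (hπs : Function.Surjective πY)
    (hπk : ∀ x, πY x = 0 ↔ dL n x = 0)
    {T : Type u} [AddCommGroup T] [Module R T]
    (ι : Y →ₗ[R] T) (q : T →ₗ[R] W)
    (hι : Function.Injective ι) (hq : Function.Surjective q)
    (hqι : ∀ t, q t = 0 ↔ t ∈ LinearMap.range ι) :
    ∃ σ : W →ₗ[R] T, ∀ w, q (σ w) = w := by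
  obtain ⟨jY, hjY⟩ := descend_surj πY hπs (dL n) (fun a ha => (hπk a).mp ha)
  have hjinj : Function.Injective jY := by
    intro a b hab
    obtain ⟨x, rfl⟩ := hπs a
    obtain ⟨x', rfl⟩ := hπs b
    have h1 : jY (πY (x - x')) = 0 := by rw [map_sub, map_sub, hab, sub_self]
    rw [hjY] at h1
    have h2 := (hπk _).mpr h1
    rw [map_sub] at h2
    exact sub_eq_zero.mp h2
  obtain ⟨H, hH⟩ := inj_extend (hinjL (n + 1)) ι hι jY
  obtain ⟨uu, huu⟩ := descend_surj q hq ((dL (n + 1)).comp H) (fun t ht => by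
    obtain ⟨y, rfl⟩ := (hqι t).mp ht
    obtain ⟨x, rfl⟩ := hπs y
    show dL (n + 1) (H (ι (πY x))) = 0
    rw [hH, hjY]
    exact (hexL n).apply_apply_eq_zero x)
  have hu0 : (dL (n + 1 + 1)).comp uu = 0 := by
    apply LinearMap.ext
    intro w
    obtain ⟨t, rfl⟩ := hq w
    show dL (n + 1 + 1) (uu (q t)) = 0
    rw [huu]
    exact (hexL (n + 1)).apply_apply_eq_zero (H t)
  obtain ⟨v, hv⟩ := (hW (n + 1) uu).mp hu0
  have hvap : ∀ w, dL (n + 1) (v w) = uu w := fun w => congrFun (congrArg DFunLike.coe hv) w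
  set r' : T →ₗ[R] IL (n + 1) := H - v.comp q with hr'
  have hr'mem : ∀ t, r' t ∈ LinearMap.range jY := by
    intro t
    have h0 : dL (n + 1) (r' t) = 0 := by
      show dL (n + 1) (H t - v (q t)) = 0
      rw [map_sub, hvap, huu, LinearMap.comp_apply, sub_self]
    obtain ⟨x, hx⟩ := ((hexL n) (r' t)).mp h0
    exact ⟨πY x, by rw [hjY, hx]⟩
  obtain ⟨r, hr⟩ := factor_inj jY hjinj r' hr'mem
  have hrι : ∀ y, r (ι y) = y := by
    intro y
    apply hjinj
    rw [hr]
    show H (ι y) - v (q (ι y)) = jY y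
    have : q (ι y) = 0 := (hqι (ι y)).mpr ⟨y, rfl⟩
    rw [this, map_zero, sub_zero, hH]
  obtain ⟨σ, hσ⟩ := descend_surj q hq (LinearMap.id - ι.comp r) (fun t ht => by
    obtain ⟨y, rfl⟩ := (hqι t).mp ht
    show ι y - ι (r (ι y)) = 0
    rw [hrι, sub_self])
  refine ⟨σ, fun w => ?_⟩
  obtain ⟨t, rfl⟩ := hq w
  rw [hσ]
  show q (t - ι (r t)) = q t
  rw [map_sub, (hqι (ι (r t))).mpr ⟨r t, rfl⟩, sub_zero]

/-- Lifting lemma: any map `W → Y` lifts along the cosyzygy surjection `IL (n+1) → Y`. -/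
theorem lift_lemma
    (hexL : ∀ n, Function.Exact (dL n) (dL (n + 1)))
    (hinjL : ∀ n, Module.Injective R (IL n))
    {W : Type u} [AddCommGroup W] [Module R W]
    (hW : ∀ j, Function.Exact (fun g : W →ₗ[R] IL j => (dL j).comp g)
      (fun g : W →ₗ[R] IL (j + 1) => (dL (j + 1)).comp g))
    (n : ℤ) (m : ℤ) (hm : m = n + 1) {Y : Type u} [AddCommGroup Y] [Module R Y]
    (πY : IL m →ₗ[R] Y) (hπs : Function.Surjective πY)
    (hπk : ∀ x, πY x = 0 ↔ dL m x = 0)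
    (c : W →ₗ[R] Y) :
    ∃ hh : W →ₗ[R] IL m, ∀ w, πY (hh w) = c w := by
  classical
  subst hm
  set K : Submodule R (IL (n + 1)) := LinearMap.ker (dL (n + 1)) with hK
  have hmemK : ∀ x : IL n, dL n x ∈ K := fun x => (hexL n).apply_apply_eq_zero x
  set πK : IL n →ₗ[R] K := LinearMap.codRestrict K (dL n) hmemK with hπK
  have hπKs : Function.Surjective πK := by
    rintro ⟨k, hk⟩
    obtain ⟨x, hx⟩ := ((hexL n) k).mp hk
    exact ⟨x, Subtype.ext hx⟩
  have hπKk : ∀ x, πK x = 0 ↔ dL n x = 0 := fun x => by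
    constructor
    · intro hx; exact congrArg Subtype.val hx
    · intro hx; exact Subtype.ext hx
  -- the pullback
  set T : Submodule R ((IL (n + 1) : Type u) × W) :=
    LinearMap.ker (πY.comp (LinearMap.fst R (IL (n + 1)) W) -
      c.comp (LinearMap.snd R (IL (n + 1)) W)) with hT
  have hmemT : ∀ p : (IL (n + 1) : Type u) × W, p ∈ T ↔ πY p.1 = c p.2 := by
    intro p
    rw [LinearMap.mem_ker]
    show πY p.1 - c p.2 = 0 ↔ _
    rw [sub_eq_zero]
  set ι : K →ₗ[R] T := LinearMap.codRestrict T
    ((LinearMap.inl R (IL (n + 1)) W).comp K.subtype)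
    (fun k => by
      rw [hmemT]
      show πY k = c 0
      rw [map_zero, (hπk k).mpr k.2]) with hι
  set q : T →ₗ[R] W := (LinearMap.snd R (IL (n + 1)) W).comp T.subtype with hq
  have hιinj : Function.Injective ι := by
    intro a b hab
    have := congrArg (fun t : T => (t : (IL (n + 1) : Type u) × W).1) hab
    exact Subtype.ext this
  have hqs : Function.Surjective q := by
    intro w
    obtain ⟨x, hx⟩ := hπs (c w)
    exact ⟨⟨(x, w), (hmemT _).mpr hx⟩, rfl⟩
  have hqι : ∀ t : T, q t = 0 ↔ t ∈ LinearMap.range ι := by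
    intro t
    constructor
    · intro ht
      have h1 : πY (t : (IL (n + 1) : Type u) × W).1 = 0 := by
        have := (hmemT _).mp t.2
        rw [this]
        show c (q t) = 0
        rw [ht, map_zero]
      refine ⟨⟨(t : (IL (n + 1) : Type u) × W).1, (hπk _).mp h1⟩, ?_⟩
      apply Subtype.ext
      show ((t : (IL (n + 1) : Type u) × W).1, (0 : W)) = (t : (IL (n + 1) : Type u) × W)
      have : (t : (IL (n + 1) : Type u) × W).2 = 0 := ht
      exact Prod.ext rfl this.symm
    · rintro ⟨k, rfl⟩
      rfl
  obtain ⟨σ, hσ⟩ := split_lemma IL dL hexL hinjL hW n πK hπKs hπKk ι q hιinj hqs hqι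
  refine ⟨(LinearMap.fst R (IL (n + 1)) W).comp (T.subtype.comp σ), fun w => ?_⟩
  have h1 : πY ((σ w : (IL (n + 1) : Type u) × W)).1 = c ((σ w : (IL (n + 1) : Type u) × W)).2 :=
    (hmemT _).mp (σ w).2
  have h2 : ((σ w : (IL (n + 1) : Type u) × W)).2 = w := hσ w
  show πY ((σ w : (IL (n + 1) : Type u) × W)).1 = c w
  rw [h1, h2]

end Complex

section Steps

variable (IL : ℤ → ModuleCat.{u} R) (dL : ∀ n : ℤ, IL n →ₗ[R] IL (n + 1))
variable (IN : ℤ → ModuleCat.{u} R) (dN : ∀ n : ℤ, IN n →ₗ[R] IN (n + 1))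

theorem up_step
    (hexL : ∀ n, Function.Exact (dL n) (dL (n + 1)))
    (hinjL : ∀ n, Module.Injective R (IL n))
    (hexN : ∀ n, Function.Exact (dN n) (dN (n + 1)))
    (n : ℤ) (u : IN n →ₗ[R] IL (n + 1)) (v : IN (n + 1) →ₗ[R] IL (n + 1 + 1))
    (rel : ∀ y, dL (n + 1) (u y) + v (dN n y) = 0) :
    ∃ w : IN (n + 1 + 1) →ₗ[R] IL (n + 1 + 1 + 1),
      ∀ y, dL (n + 1 + 1) (v y) + w (dN (n + 1) y) = 0 := by
  have hker : ∀ y : IN (n + 1), dN (n + 1) y = 0 → (-((dL (n + 1 + 1)).comp v)) y = 0 := by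
    intro y hy
    obtain ⟨z, rfl⟩ := (hexN n y).mp hy
    show -(dL (n + 1 + 1) (v (dN n z))) = 0
    have h1 : v (dN n z) = -(dL (n + 1) (u z)) := eq_neg_of_add_eq_zero_right (rel z)
    rw [h1, map_neg, neg_neg]
    exact (hexL (n + 1)).apply_apply_eq_zero (u z)
  obtain ⟨w, hw⟩ := factor_through_map (hinjL (n + 1 + 1 + 1)) (dN (n + 1))
    (-((dL (n + 1 + 1)).comp v)) hker
  refine ⟨w, fun y => ?_⟩
  rw [hw y]
  show dL (n + 1 + 1) (v y) + -(dL (n + 1 + 1) (v y)) = 0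
  rw [add_neg_cancel]

theorem down_step
    (hexL : ∀ n, Function.Exact (dL n) (dL (n + 1)))
    (hinjL : ∀ n, Module.Injective R (IL n))
    (hexN : ∀ n, Function.Exact (dN n) (dN (n + 1)))
    (n : ℤ)
    (hW : ∀ j, Function.Exact (fun g : IN n →ₗ[R] IL j => (dL j).comp g)
      (fun g : IN n →ₗ[R] IL (j + 1) => (dL (j + 1)).comp g))
    (u : IN (n + 1) →ₗ[R] IL (n + 1 + 1)) (v : IN (n + 1 + 1) →ₗ[R] IL (n + 1 + 1 + 1))
    (rel : ∀ y, dL (n + 1 + 1) (u y) + v (dN (n + 1) y) = 0) :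
    ∃ w : IN n →ₗ[R] IL (n + 1), ∀ y, dL (n + 1) (w y) + u (dN n y) = 0 := by
  set c0 : IN n →ₗ[R] IL (n + 1 + 1) := -(u.comp (dN n)) with hc0
  have hmem : ∀ y, c0 y ∈ LinearMap.range (dL (n + 1)) := by
    intro y
    have h1 : dL (n + 1 + 1) (c0 y) = 0 := by
      show dL (n + 1 + 1) (-(u (dN n y))) = 0
      rw [map_neg, neg_eq_zero]
      have h2 := rel (dN n y)
      have h3 : dN (n + 1) (dN n y) = 0 := (hexN n).apply_apply_eq_zero y
      rw [h3, map_zero, add_zero] at h2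
      exact h2
    obtain ⟨x, hx⟩ := ((hexL (n + 1)) (c0 y)).mp h1
    exact ⟨x, hx⟩
  have hπk : ∀ x, (dL (n + 1)).rangeRestrict x = 0 ↔ dL (n + 1) x = 0 := by
    intro x
    constructor
    · intro hx; exact congrArg Subtype.val hx
    · intro hx; exact Subtype.ext hx
  obtain ⟨w, hww⟩ := lift_lemma IL dL hexL hinjL hW n (n + 1) rfl (dL (n + 1)).rangeRestrict
    (dL (n + 1)).surjective_rangeRestrict hπk
    (LinearMap.codRestrict (LinearMap.range (dL (n + 1))) c0 hmem)
  refine ⟨w, fun y => ?_⟩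
  have h4 : dL (n + 1) (w y) = c0 y := congrArg Subtype.val (hww y)
  rw [h4]
  show -(u (dN n y)) + u (dN n y) = 0
  rw [neg_add_cancel]

end Steps

section Family

variable (IL : ℤ → ModuleCat.{u} R) (dL : ∀ n : ℤ, IL n →ₗ[R] IL (n + 1))
variable (IN : ℤ → ModuleCat.{u} R) (dN : ∀ n : ℤ, IN n →ₗ[R] IN (n + 1))

theorem family_exists
    (hexL : ∀ n, Function.Exact (dL n) (dL (n + 1)))
    (hinjL : ∀ n, Module.Injective R (IL n))
    (hexN : ∀ n, Function.Exact (dN n) (dN (n + 1)))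
    (hWall : ∀ m : ℤ, ∀ j, Function.Exact
      (fun g : IN m →ₗ[R] IL j => (dL j).comp g)
      (fun g : IN m →ₗ[R] IL (j + 1) => (dL (j + 1)).comp g))
    (hn1 : IN (-1) →ₗ[R] IL (-1 + 1)) (h0 : IN (-1 + 1) →ₗ[R] IL (-1 + 1 + 1))
    (rel1 : ∀ y, dL (-1 + 1) (hn1 y) + h0 (dN (-1) y) = 0) :
    ∃ h : ∀ n : ℤ, (IN n →ₗ[R] IL (n + 1)),
      (∀ n, ∀ y, dL (n + 1) (h n y) + h (n + 1) (dN n y) = 0) ∧ h (-1) = hn1 := by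
  classical
  let UpS : ℕ → Type u := fun k =>
    Σ' (u : IN (Int.ofNat k) →ₗ[R] IL (Int.ofNat k + 1))
      (v : IN (Int.ofNat k + 1) →ₗ[R] IL (Int.ofNat k + 1 + 1)),
      ∀ y, dL (Int.ofNat k + 1) (u y) + v (dN (Int.ofNat k) y) = 0
  let upBase : UpS 0 :=
    ⟨h0, (up_step IL dL IN dN hexL hinjL hexN (-1) hn1 h0 rel1).choose,
      (up_step IL dL IN dN hexL hinjL hexN (-1) hn1 h0 rel1).choose_spec⟩
  let upStepF : ∀ k : ℕ, UpS k → UpS (k + 1) := fun k st =>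
    ⟨st.2.1, (up_step IL dL IN dN hexL hinjL hexN (Int.ofNat k) st.1 st.2.1 st.2.2).choose,
      (up_step IL dL IN dN hexL hinjL hexN (Int.ofNat k) st.1 st.2.1 st.2.2).choose_spec⟩
  let up : ∀ k : ℕ, UpS k := fun k => Nat.rec upBase upStepF k
  let DnS : ℕ → Type u := fun k =>
    Σ' (u : IN (Int.negSucc k) →ₗ[R] IL (Int.negSucc k + 1))
      (v : IN (Int.negSucc k + 1) →ₗ[R] IL (Int.negSucc k + 1 + 1)),
      ∀ y, dL (Int.negSucc k + 1) (u y) + v (dN (Int.negSucc k) y) = 0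
  let dnBase : DnS 0 := ⟨hn1, h0, rel1⟩
  let dnStepF : ∀ k : ℕ, DnS k → DnS (k + 1) := fun k st =>
    ⟨(down_step IL dL IN dN hexL hinjL hexN (Int.negSucc (k + 1))
        (hWall (Int.negSucc (k + 1))) st.1 st.2.1 st.2.2).choose, st.1,
      (down_step IL dL IN dN hexL hinjL hexN (Int.negSucc (k + 1))
        (hWall (Int.negSucc (k + 1))) st.1 st.2.1 st.2.2).choose_spec⟩
  let dn : ∀ k : ℕ, DnS k := fun k => Nat.rec dnBase dnStepF k
  refine ⟨fun n => match n with
    | Int.ofNat k => (up k).1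
    | Int.negSucc k => (dn k).1, ?_, rfl⟩
  intro n
  cases n with
  | ofNat k => exact (up k).2.2
  | negSucc k =>
    cases k with
    | zero => exact fun y => rel1 y
    | succ k => exact (dn (k + 1)).2.2


section AlongSurj

variable (IL : ℤ → ModuleCat.{u} R) (dL : ∀ n : ℤ, IL n →ₗ[R] IL (n + 1))

/-- Lifting along an arbitrary surjection whose kernel is (the image of) a cosyzygy
of the complex `IL`. -/
theorem lift_along_surj
    (hexL : ∀ n, Function.Exact (dL n) (dL (n + 1)))
    (hinjL : ∀ n, Module.Injective R (IL n))
    {W : Type u} [AddCommGroup W] [Module R W]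
    (hW : ∀ j, Function.Exact (fun g : W →ₗ[R] IL j => (dL j).comp g)
      (fun g : W →ₗ[R] IL (j + 1) => (dL (j + 1)).comp g))
    (n : ℤ) {Y : Type u} [AddCommGroup Y] [Module R Y]
    (πY : IL n →ₗ[R] Y) (hπs : Function.Surjective πY)
    (hπk : ∀ x, πY x = 0 ↔ dL n x = 0)
    {P Q : Type u} [AddCommGroup P] [Module R P] [AddCommGroup Q] [Module R Q]
    (p : P →ₗ[R] Q) (hp : Function.Surjective p)
    (ιf : Y →ₗ[R] P) (hιf : Function.Injective ιf)
    (hker : ∀ x, p x = 0 ↔ x ∈ LinearMap.range ιf)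
    (c : W →ₗ[R] Q) : ∃ s : W →ₗ[R] P, ∀ w, p (s w) = c w := by
  classical
  set T : Submodule R (P × W) :=
    LinearMap.ker (p.comp (LinearMap.fst R P W) - c.comp (LinearMap.snd R P W)) with hT
  have hmemT : ∀ pr : P × W, pr ∈ T ↔ p pr.1 = c pr.2 := by
    intro pr
    rw [LinearMap.mem_ker]
    show p pr.1 - c pr.2 = 0 ↔ _
    rw [sub_eq_zero]
  set ι : Y →ₗ[R] T := LinearMap.codRestrict T ((LinearMap.inl R P W).comp ιf)
    (fun y => by
      rw [hmemT]
      show p (ιf y) = c 0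
      rw [map_zero]
      exact (hker (ιf y)).mpr ⟨y, rfl⟩) with hι
  set q : T →ₗ[R] W := (LinearMap.snd R P W).comp T.subtype with hq
  have hιinj : Function.Injective ι := by
    intro a b hab
    have h1 : ιf a = ιf b := congrArg (fun t : T => (t : P × W).1) hab
    exact hιf h1
  have hqs : Function.Surjective q := by
    intro w
    obtain ⟨x, hx⟩ := hp (c w)
    exact ⟨⟨(x, w), (hmemT _).mpr hx⟩, rfl⟩
  have hqι : ∀ t : T, q t = 0 ↔ t ∈ LinearMap.range ι := by
    intro t
    constructor
    · intro ht
      have h2 : (t : P × W).2 = 0 := ht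
      have h1 : p (t : P × W).1 = 0 := by
        rw [(hmemT _).mp t.2, h2, map_zero]
      obtain ⟨y, hy⟩ := (hker _).mp h1
      refine ⟨y, ?_⟩
      apply Subtype.ext
      show (ιf y, (0 : W)) = (t : P × W)
      exact Prod.ext hy h2.symm
    · rintro ⟨y, rfl⟩
      rfl
  obtain ⟨σ, hσ⟩ := split_lemma IL dL hexL hinjL hW n πY hπs hπk ι q hιinj hqs hqι
  refine ⟨(LinearMap.fst R P W).comp (T.subtype.comp σ), fun w => ?_⟩
  have h1 := (hmemT _).mp (σ w).2
  have h2 : ((σ w : P × W)).2 = w := hσ w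
  show p ((σ w : P × W)).1 = c w
  rw [h1, h2]

end AlongSurj

end Family


theorem rel1_aux {A1 A2 B0 B1 LL MM : Type u}
    [AddCommGroup A1] [Module R A1] [AddCommGroup A2] [Module R A2]
    [AddCommGroup B0] [Module R B0] [AddCommGroup B1] [Module R B1]
    [AddCommGroup LL] [Module R LL] [AddCommGroup MM] [Module R MM]
    (dL0 : A1 →ₗ[R] A2) (dNm : B0 →ₗ[R] B1) (hn1 : B0 →ₗ[R] A1)
    (πL : A1 →ₗ[R] LL) (jL : LL →ₗ[R] A2) (e : MM →ₗ[R] A2) (s : B1 →ₗ[R] MM)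
    (c : B0 →ₗ[R] LL) (f : LL →ₗ[R] MM)
    (hjL : ∀ a, jL (πL a) = dL0 a)
    (he : ∀ l, e (f l) = jL l)
    (hc : ∀ y, f (c y) = -(s (dNm y)))
    (hhn1 : ∀ w, πL (hn1 w) = c w) :
    ∀ y, dL0 (hn1 y) + (e.comp s) (dNm y) = 0 := by
  intro y
  have a1 : dL0 (hn1 y) = jL (c y) := by
    have t1 := hjL (hn1 y)
    rw [hhn1 y] at t1
    exact t1.symm
  have a2 : (e.comp s) (dNm y) = -(jL (c y)) := by
    show e (s (dNm y)) = -(jL (c y))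
    have a3 : s (dNm y) = -(f (c y)) := by rw [hc y, neg_neg]
    rw [a3, map_neg, he]
  rw [a1, a2, add_neg_cancel]

theorem pi_exact_aux {A0 A1 B0 B1 LL MM NN : Type u}
    [AddCommGroup A0] [Module R A0] [AddCommGroup A1] [Module R A1]
    [AddCommGroup B0] [Module R B0] [AddCommGroup B1] [Module R B1]
    [AddCommGroup LL] [Module R LL] [AddCommGroup MM] [Module R MM]
    [AddCommGroup NN] [Module R NN]
    (dLm : A0 →ₗ[R] A1) (dNm : B0 →ₗ[R] B1) (hm : B0 →ₗ[R] A1)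
    (πL : A1 →ₗ[R] LL) (πN : B1 →ₗ[R] NN)
    (f : LL →ₗ[R] MM) (g : MM →ₗ[R] NN) (s : B1 →ₗ[R] MM) (c : B0 →ₗ[R] LL)
    (hfinj : Function.Injective f) (hfg : Function.Exact f g)
    (hs : ∀ w, g (s w) = πN w)
    (hπLe : Function.Exact dLm πL) (hπNe : Function.Exact dNm πN)
    (hc : ∀ y, f (c y) = -(s (dNm y)))
    (hhc : ∀ w, πL (hm w) = c w) :
    Function.Exact
      (LinearMap.prod ((dLm.comp (LinearMap.fst R A0 B0)) + (hm.comp (LinearMap.snd R A0 B0)))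
        (dNm.comp (LinearMap.snd R A0 B0)))
      ((f.comp (πL.comp (LinearMap.fst R A1 B1))) + (s.comp (LinearMap.snd R A1 B1))) := by
  intro p
  constructor
  · intro hp
    have hp' : f (πL p.1) + s p.2 = 0 := hp
    have h1 : πN p.2 = 0 := by
      have h2 : g (f (πL p.1) + s p.2) = 0 := by rw [hp', map_zero]
      rw [map_add, hfg.apply_apply_eq_zero, zero_add, hs] at h2
      exact h2
    obtain ⟨y', hy'⟩ := (hπNe p.2).mp h1
    have h3 : f (πL p.1 - c y') = 0 := by
      rw [map_sub, hc y', hy', sub_neg_eq_add]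
      exact hp'
    have h4 : πL p.1 - c y' = 0 := hfinj (h3.trans (map_zero f).symm)
    have h5 : πL (p.1 - hm y') = 0 := by
      rw [map_sub, hhc y']
      exact h4
    obtain ⟨x', hx'⟩ := (hπLe _).mp h5
    refine ⟨(x', y'), ?_⟩
    show (dLm x' + hm y', dNm y') = p
    have hfst : dLm x' + hm y' = p.1 := by rw [hx', sub_add_cancel]
    exact Prod.ext hfst hy'
  · rintro ⟨q, rfl⟩
    show f (πL (dLm q.1 + hm q.2)) + s (dNm q.2) = 0
    have b1 : πL (dLm q.1) = 0 := (hπLe _).mpr ⟨q.1, rfl⟩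
    rw [map_add, b1, zero_add, hhc q.2, hc q.2, neg_add_cancel]

theorem ext_vanish_of_injective (W N : ModuleCat.{u} R) (hW : Module.Injective R W) :
    Subsingleton (((_root_.Ext ℤ (ModuleCat.{u} R) 1).obj (Opposite.op N)).obj W) := by
  let P : ProjectiveResolution N := ProjectiveResolution.of N
  have iso := P.isoExt (R := ℤ) 1 W
  have hex : Function.Exact (P.complex.d 2 1) (P.complex.d 1 0) := by
    have h := P.complex_exactAt_succ 0
    rw [HomologicalComplex.exactAt_iff' _ 2 1 0 (by simp) (by simp)] at h
    rw [ShortComplex.moduleCat_exact_iff_range_eq_ker] at h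
    exact LinearMap.exact_iff.mpr h.symm
  have hz : Limits.IsZero ((P.complex.linearYonedaObj ℤ W).homology 1) := by
    rw [← HomologicalComplex.exactAt_iff_isZero_homology]
    rw [HomologicalComplex.exactAt_iff' _ 0 1 2 (by simp) (by simp)]
    rw [ShortComplex.moduleCat_exact_iff]
    intro (x2 : P.complex.X 1 ⟶ W) hx2
    have hx2' : ∀ a, x2 (P.complex.d 2 1 a) = 0 := by
      intro a
      have h0 : P.complex.d 2 1 ≫ x2 = 0 := by
        exact hx2
      have : (P.complex.d 2 1 ≫ x2) a = 0 := by rw [h0]; rfl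
      simpa using this
    have hker : ∀ a, P.complex.d 1 0 a = 0 → x2 a = 0 := by
      intro a ha
      obtain ⟨b, rfl⟩ := (hex a).mp ha
      exact hx2' b
    obtain ⟨ψ, hψ⟩ := factor_through_map hW (P.complex.d 1 0).hom x2.hom hker
    refine ⟨ModuleCat.ofHom ψ, ?_⟩
    show (P.complex.linearYonedaObj ℤ W).d 0 1 _ = x2
    simp only [ChainComplex.linearYonedaObj_d]
    show P.complex.d 1 0 ≫ ModuleCat.ofHom ψ = x2
    ext a
    exact hψ a
  have hzExt : Limits.IsZero (((_root_.Ext ℤ (ModuleCat.{u} R) 1).obj (Opposite.op N)).obj W) :=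
    Limits.IsZero.of_iso hz iso
  set E := (((_root_.Ext ℤ (ModuleCat.{u} R) 1).obj (Opposite.op N)).obj W) with hE
  have hzero : ∀ x : E, x = 0 := by
    intro x
    have h : (𝟙 E) = (0 : E ⟶ E) := hzExt.eq_of_src _ _
    calc x = (𝟙 E) x := rfl
    _ = (0 : E ⟶ E) x := by rw [h]
    _ = 0 := rfl
  exact ⟨fun a b => by rw [hzero a, hzero b]⟩

end GWIHelpers

set_option maxHeartbeats 3000000 in
/-- The class of Gorenstein weak injective modules is closed under extensions. -/
theorem gorensteinWeakInjective_extension (L M N : ModuleCat.{u} R)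
    (f : L →ₗ[R] M) (g : M →ₗ[R] N) (hse : ShortExactSeq R L M N f g)
    (hL : GorensteinWeakInjective R L) (hN : GorensteinWeakInjective R N) :
    GorensteinWeakInjective R M := by
  classical
  obtain ⟨hfinj, hgsurj, hfg⟩ := hse
  obtain ⟨IL, dL, πL, ⟨hinjL, hexL, haccL⟩, hπLs, hπLe⟩ := hL
  obtain ⟨IN, dN, πN, ⟨hinjN, hexN, haccN⟩, hπNs, hπNe⟩ := hN
  -- every (injective) module of the `N`-complex is weak injective
  have hWIN : ∀ m : ℤ, WeakInjective R (IN m) :=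
    fun m N' _ => ext_vanish_of_injective (IN m) N' (hinjN m)
  have hWall : ∀ m : ℤ, ∀ j, Function.Exact
      (fun g : IN m →ₗ[R] IL j => (dL j).comp g)
      (fun g : IN m →ₗ[R] IL (j + 1) => (dL (j + 1)).comp g) :=
    fun m => haccL (IN m) (hWIN m)
  have hπLk : ∀ x, πL x = 0 ↔ dL 0 x = 0 := by
    intro x
    constructor
    · intro hx
      exact ((hexL (-1)) (by exact x)).mpr ((hπLe x).mp hx)
    · intro hx
      exact (hπLe x).mpr (((hexL (-1)) (by exact x)).mp (by exact hx))
  have hkerf : ∀ x, g x = 0 ↔ x ∈ LinearMap.range f := by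
    intro x
    constructor
    · intro hx
      obtain ⟨l, hl⟩ := (hfg x).mp hx
      exact ⟨l, hl⟩
    · rintro ⟨l, rfl⟩
      exact hfg.apply_apply_eq_zero l
  -- a lift `s : IN 0 → M` of `πN` along `g`
  obtain ⟨s, hs⟩ := lift_along_surj IL dL hexL hinjL (hWall 0) 0 πL hπLs hπLk
    g hgsurj f hfinj hkerf πN
  -- `c : IN (-1) → L` with `f ∘ c = - s ∘ dN (-1)`
  obtain ⟨c, hc⟩ : ∃ c : (IN (-1) : Type u) →ₗ[R] L,
      ∀ y, f (c y) = -(s ((by exact dN (-1) y : (IN 0 : Type u)))) := by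
    refine factor_inj f hfinj (-(s.comp (by exact dN (-1)))) (fun y => ?_)
    have h1 : g (-(s ((by exact dN (-1) y : (IN 0 : Type u))))) = 0 := by
      rw [map_neg, hs, neg_eq_zero]
      exact (by exact (hπNe ((dN (-1)) y)).mpr ⟨y, rfl⟩)
    exact (hkerf _).mp h1
  -- `h (-1)`, normalized to live in `IL 0`
  obtain ⟨hn1, hhn1⟩ : ∃ hh : (IN (-1) : Type u) →ₗ[R] (IL 0 : Type u),
      ∀ w, πL (hh w) = c w := by
    exact lift_lemma IL dL hexL hinjL (hWall (-1)) (-1) (-1 + 1) rfl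
      (by exact πL) (by exact hπLs) (by exact hπLk) c
  -- the embedding `jL : L → IL 1` and its extension `e : M → IL 1`
  obtain ⟨jL, hjL⟩ := descend_surj πL hπLs (dL 0) (fun a ha => (hπLk a).mp ha)
  obtain ⟨e, he⟩ := inj_extend (hinjL (0 + 1)) f hfinj jL
  have rel1 := rel1_aux (dL 0) (by exact dN (-1) :
      (IN (-1) : Type u) →ₗ[R] (IN 0 : Type u)) hn1 πL jL e s c f hjL he
    (by exact hc) hhn1
  obtain ⟨hcon, relall, hcon1⟩ : ∃ h : ∀ n : ℤ, ((IN n : Type u) →ₗ[R] IL (n + 1)),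
      (∀ n, ∀ y, dL (n + 1) (h n y) + h (n + 1) (dN n y) = 0) ∧
        h (-1) = (by exact hn1) := by
    exact family_exists IL dL IN dN hexL hinjL hexN hWall (by exact hn1)
      (by exact e.comp s) (by exact rel1)
  -- the totally acyclic complex for `M`
  refine ⟨fun n : ℤ => ModuleCat.of R (↥(IL n) × ↥(IN n)),
    fun n : ℤ => LinearMap.prod
      (((dL n).comp (LinearMap.fst R (IL n) (IN n))) +
        ((hcon n).comp (LinearMap.snd R (IL n) (IN n))))
      ((dN n).comp (LinearMap.snd R (IL n) (IN n))),
    (f.comp (πL.comp (LinearMap.fst R (IL 0) (IN 0)))) +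
      (s.comp (LinearMap.snd R (IL 0) (IN 0))), ⟨?_, ?_, ?_⟩, ?_, ?_⟩
  · -- injectivity
    intro n
    exact prod_injective (hinjL n) (hinjN n)
  · -- exactness of the complex
    intro n p
    constructor
    · intro hp
      have e1 : dL (n + 1) p.1 + hcon (n + 1) p.2 = 0 := congrArg Prod.fst hp
      have e2 : dN (n + 1) p.2 = 0 := congrArg Prod.snd hp
      obtain ⟨y2, hy2⟩ := (hexN n p.2).mp e2
      have a1 : dL (n + 1) p.1 = -(hcon (n + 1) p.2) := eq_neg_of_add_eq_zero_left e1
      have a2 : dL (n + 1) (hcon n y2) = -(hcon (n + 1) (dN n y2)) :=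
        eq_neg_of_add_eq_zero_left (relall n y2)
      have e3 : dL (n + 1) (p.1 - hcon n y2) = 0 := by
        rw [map_sub, a1, a2, hy2, sub_self]
      obtain ⟨y1, hy1⟩ := ((hexL n) _).mp e3
      refine ⟨(y1, y2), ?_⟩
      show (dL n y1 + hcon n y2, dN n y2) = p
      refine Prod.ext ?_ hy2
      show dL n y1 + hcon n y2 = p.1
      rw [hy1, sub_add_cancel]
    · rintro ⟨q, rfl⟩
      show (dL (n + 1) (dL n q.1 + hcon n q.2) + hcon (n + 1) (dN n q.2),
        dN (n + 1) (dN n q.2)) = 0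
      have b1 : dL (n + 1) (dL n q.1) = 0 := (hexL n).apply_apply_eq_zero q.1
      refine Prod.ext ?_ ((hexN n).apply_apply_eq_zero q.2)
      show dL (n + 1) (dL n q.1 + hcon n q.2) + hcon (n + 1) (dN n q.2) = 0
      rw [map_add, b1, zero_add]
      exact relall n q.2
  · -- `Hom(W, -)`-exactness
    intro W hWweak n φ
    constructor
    · intro hφ
      have hφw : ∀ w, dL (n + 1) (φ w).1 + hcon (n + 1) (φ w).2 = 0 ∧
          dN (n + 1) (φ w).2 = 0 := by
        intro w
        have h2 := DFunLike.congr_fun hφ w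
        exact ⟨congrArg Prod.fst h2, congrArg Prod.snd h2⟩
      have c2 : (dN (n + 1)).comp
          ((LinearMap.snd R (IL (n + 1)) (IN (n + 1))).comp φ) = 0 :=
        LinearMap.ext fun w => (hφw w).2
      obtain ⟨ψ2, hψ2⟩ := (haccN W hWweak n _).mp c2
      have hψ2' : ∀ w, dN n (ψ2 w) = (φ w).2 := fun w => DFunLike.congr_fun hψ2 w
      have c1 : (dL (n + 1)).comp
          ((((LinearMap.fst R (IL (n + 1)) (IN (n + 1))).comp φ)) -
            (hcon n).comp ψ2) = 0 := by
        apply LinearMap.ext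
        intro w
        show dL (n + 1) ((φ w).1 - hcon n (ψ2 w)) = 0
        have a1 : dL (n + 1) (φ w).1 = -(hcon (n + 1) (φ w).2) :=
          eq_neg_of_add_eq_zero_left (hφw w).1
        have a2 : dL (n + 1) (hcon n (ψ2 w)) = -(hcon (n + 1) (dN n (ψ2 w))) :=
          eq_neg_of_add_eq_zero_left (relall n (ψ2 w))
        rw [map_sub, a1, a2, hψ2' w, sub_self]
      obtain ⟨ψ1, hψ1⟩ := (haccL W hWweak n _).mp c1
      have hψ1' : ∀ w, dL n (ψ1 w) = (φ w).1 - hcon n (ψ2 w) :=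
        fun w => DFunLike.congr_fun hψ1 w
      refine ⟨LinearMap.prod ψ1 ψ2, ?_⟩
      apply LinearMap.ext
      intro w
      show (dL n (ψ1 w) + hcon n (ψ2 w), dN n (ψ2 w)) = φ w
      refine Prod.ext ?_ (hψ2' w)
      show dL n (ψ1 w) + hcon n (ψ2 w) = (φ w).1
      rw [hψ1' w, sub_add_cancel]
    · rintro ⟨ψ, rfl⟩
      apply LinearMap.ext
      intro w
      show (dL (n + 1) (dL n (ψ w).1 + hcon n (ψ w).2) + hcon (n + 1) (dN n (ψ w).2),
        dN (n + 1) (dN n (ψ w).2)) = 0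
      have b1 : dL (n + 1) (dL n (ψ w).1) = 0 := (hexL n).apply_apply_eq_zero (ψ w).1
      refine Prod.ext ?_ ((hexN n).apply_apply_eq_zero (ψ w).2)
      show dL (n + 1) (dL n (ψ w).1 + hcon n (ψ w).2) + hcon (n + 1) (dN n (ψ w).2) = 0
      rw [map_add, b1, zero_add]
      exact relall n (ψ w).2
  · -- surjectivity of `π`
    intro m
    obtain ⟨y, hy⟩ := hπNs (g m)
    have h1 : g (m - s y) = 0 := by rw [map_sub, hs y, hy, sub_self]
    obtain ⟨l, hl⟩ := (hfg _).mp h1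
    obtain ⟨x, hx⟩ := hπLs l
    refine ⟨(x, y), ?_⟩
    show f (πL x) + s y = m
    rw [hx, hl, sub_add_cancel]
  · -- exactness at `π`
    exact pi_exact_aux (dL (-1)) (dN (-1)) (hcon (-1)) (by exact πL) (by exact πN)
      f g (by exact s) c hfinj hfg (by exact hs) (by exact hπLe) (by exact hπNe)
      (by exact hc) (by intro w; rw [hcon1]; exact hhn1 w)
end
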